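/- arXiv:1707.03015 — 10 statements merged into one kernel-verified Lean document; each statement's English description precedes it below -/
import Mathlib

section
/- Left-factor part of the Shiota-type factorization theorem (Theorem 1 / Theorem 4 of the paper): Let F, Q, P, P̃ : ℝ → 𝔸 be curves in a unital normed algebra 𝔸, with F and Q differentiable and F(t) invertible for every t. If the factorized operator evolution equations F'(t) = F(t)·P(t) − P̃(t)·F(t) and Q'(t) = Q(t)·P(t) − P̃(t)·Q(t) hold for all t ∈ ℝ, then the curve l(t) := F(t)⁻¹·Q(t) is differentiable and satisfies the Lax-type flow l'(t) = l(t)·P(t) − P(t)·l(t) = [l(t), P(t)] for all t ∈ ℝ. -/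
open Filter Topology

lemma inv_curve_deriv {𝔸 : Type*} [NormedRing 𝔸] [NormedAlgebra ℝ 𝔸]
    (F F' : ℝ → 𝔸) (hF : ∀ t : ℝ, HasDerivAt F (F' t) t)
    (hFu : ∀ t : ℝ, IsUnit (F t)) (t : ℝ) :
    HasDerivAt (fun s : ℝ => Ring.inverse (F s))
      (-(Ring.inverse (F t) * F' t * Ring.inverse (F t))) t := by
  set G : ℝ → 𝔸 := fun s => Ring.inverse (F s) with hG
  have key : ∀ s, G s - G t = G s * (F t - F s) * G t := by
    intro s
    have h1 : G s * F t * G t = G s := by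
      rw [mul_assoc, Ring.mul_inverse_cancel _ (hFu t), mul_one]
    have h2 : G s * F s * G t = G t := by
      rw [Ring.inverse_mul_cancel _ (hFu s), one_mul]
    rw [mul_sub, sub_mul, h1, h2]
  -- continuity of G at t
  have hFc : ContinuousAt F t := (hF t).continuousAt
  have hGc : Tendsto G (𝓝 t) (𝓝 (G t)) := by
    have hsmall : ∀ᶠ s in 𝓝 t, ‖F t - F s‖ * ‖G t‖ ≤ 1/2 := by
      have : Tendsto (fun s => ‖F t - F s‖ * ‖G t‖) (𝓝 t) (𝓝 (‖F t - F t‖ * ‖G t‖)) := by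
        exact (((tendsto_const_nhds.sub hFc).norm).mul tendsto_const_nhds)
      simp only [sub_self, norm_zero, zero_mul] at this
      exact this.eventually_le_const (by norm_num)
    have hbound : ∀ᶠ s in 𝓝 t, ‖G s - G t‖ ≤ 2 * ‖G t‖ * ‖F t - F s‖ * ‖G t‖ := by
      filter_upwards [hsmall] with s hs
      have hG_est : ‖G s‖ ≤ 2 * ‖G t‖ := by
        have h1 : ‖G s‖ ≤ ‖G t‖ + ‖G s‖ * ‖F t - F s‖ * ‖G t‖ := by
          calc ‖G s‖ = ‖G t + G s * (F t - F s) * G t‖ := by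
                rw [← key s]; congr 1; abel
            _ ≤ ‖G t‖ + ‖G s * (F t - F s) * G t‖ := norm_add_le _ _
            _ ≤ ‖G t‖ + ‖G s‖ * ‖F t - F s‖ * ‖G t‖ := by
                gcongr
                exact (norm_mul_le _ _).trans (by gcongr; exact norm_mul_le _ _)
        nlinarith [norm_nonneg (G s), norm_nonneg (G t), norm_nonneg (F t - F s)]
      calc ‖G s - G t‖ = ‖G s * (F t - F s) * G t‖ := by rw [key s]
        _ ≤ ‖G s‖ * ‖F t - F s‖ * ‖G t‖ :=
            (norm_mul_le _ _).trans (by gcongr; exact norm_mul_le _ _)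
        _ ≤ 2 * ‖G t‖ * ‖F t - F s‖ * ‖G t‖ := by
            gcongr
    have h0 : Tendsto (fun s => 2 * ‖G t‖ * ‖F t - F s‖ * ‖G t‖) (𝓝 t) (𝓝 0) := by
      have : Tendsto (fun s => 2 * ‖G t‖ * ‖F t - F s‖ * ‖G t‖) (𝓝 t)
          (𝓝 (2 * ‖G t‖ * ‖F t - F t‖ * ‖G t‖)) :=
        ((tendsto_const_nhds.mul ((tendsto_const_nhds.sub hFc).norm)).mul tendsto_const_nhds)
      simpa using this
    have : Tendsto (fun s => G s - G t) (𝓝 t) (𝓝 0) :=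
      squeeze_zero_norm' hbound h0
    have := this.add_const (G t)
    simpa using this
  rw [hasDerivAt_iff_tendsto_slope]
  have hslope : Tendsto (slope F t) (𝓝[≠] t) (𝓝 (F' t)) :=
    hasDerivAt_iff_tendsto_slope.mp (hF t)
  have heq : ∀ s, slope G t s = -(G s * slope F t s * G t) := by
    intro s
    simp only [slope_def_field, slope, vsub_eq_sub]
    rw [key s]
    rw [← neg_sub (F s) (F t), mul_neg, neg_mul, smul_neg, mul_smul_comm, smul_mul_assoc]
  have : Tendsto (fun s => -(G s * slope F t s * G t)) (𝓝[≠] t)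
      (𝓝 (-(G t * F' t * G t))) :=
    (((hGc.mono_left nhdsWithin_le_nhds).mul hslope).mul tendsto_const_nhds).neg
  exact this.congr (fun s => (heq s).symm)

/-- Left-factor part of the Shiota-type factorization theorem:
if `F' = F·P − Pt·F` and `Q' = Q·P − Pt·Q` with `F` unit-valued (here `Pt` plays
the role of `P̃ = ∇γ(l̃)₊`), then `l := F⁻¹·Q` satisfies the Lax-type flow
`l' = l·P − P·l = [l, P]`. -/
theorem shiota_factorization_left
    {𝔸 : Type*} [NormedRing 𝔸] [NormedAlgebra ℝ 𝔸]
    (F Q P Pt F' Q' : ℝ → 𝔸)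
    (hF : ∀ t : ℝ, HasDerivAt F (F' t) t)
    (hQ : ∀ t : ℝ, HasDerivAt Q (Q' t) t)
    (hFu : ∀ t : ℝ, IsUnit (F t))
    (hF' : ∀ t : ℝ, F' t = F t * P t - Pt t * F t)
    (hQ' : ∀ t : ℝ, Q' t = Q t * P t - Pt t * Q t) :
    ∀ t : ℝ, HasDerivAt (fun s : ℝ => Ring.inverse (F s) * Q s)
      ((Ring.inverse (F t) * Q t) * P t - P t * (Ring.inverse (F t) * Q t)) t := by
  intro t
  have hGd := inv_curve_deriv F F' hF hFu t
  have hmul := hGd.mul (hQ t)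
  convert hmul using 1
  · rfl
  set g := Ring.inverse (F t)
  have hgf : g * F t = 1 := Ring.inverse_mul_cancel _ (hFu t)
  have hfg : F t * g = 1 := Ring.mul_inverse_cancel _ (hFu t)
  rw [hF' t, hQ' t]
  have e1 : g * (F t * P t - Pt t * F t) * g = P t * g - g * Pt t := by
    rw [mul_sub, sub_mul, ← mul_assoc, ← mul_assoc, hgf, one_mul,
      mul_assoc (g * Pt t), hfg, mul_one]
  rw [e1]
  noncomm_ring
end

section
/- Right-factor part of the Shiota-type factorization theorem (Theorem 1 / Theorem 4 of the paper): Let F, Q, P, P̃ : ℝ → 𝔸 be curves in a unital normed algebra 𝔸, with F and Q differentiable and F(t) invertible for every t. If F'(t) = F(t)·P(t) − P̃(t)·F(t) and Q'(t) = Q(t)·P(t) − P̃(t)·Q(t) hold for all t ∈ ℝ, then the curve l̃(t) := Q(t)·F(t)⁻¹ is differentiable and satisfies the Lax-type flow l̃'(t) = l̃(t)·P̃(t) − P̃(t)·l̃(t) = [l̃(t), P̃(t)] for all t ∈ ℝ. -/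
section Aux

variable {𝔸 : Type*} [NormedRing 𝔸] [NormedAlgebra ℝ 𝔸]

lemma inverse_curve_hasDerivAt (F F' : ℝ → 𝔸)
    (hF : ∀ t : ℝ, HasDerivAt F (F' t) t) (hFu : ∀ t : ℝ, IsUnit (F t)) (t : ℝ) :
    HasDerivAt (fun s : ℝ => Ring.inverse (F s))
      (-(Ring.inverse (F t) * F' t * Ring.inverse (F t))) t := by
  set G : ℝ → 𝔸 := fun s => Ring.inverse (F s) with hG
  have hgf : ∀ s, G s * F s = 1 := fun s => Ring.inverse_mul_cancel _ (hFu s)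
  have hfg : ∀ s, F s * G s = 1 := fun s => Ring.mul_inverse_cancel _ (hFu s)
  have hdiff : ∀ s, G s - G t = G s * (F t - F s) * G t := by
    intro s
    calc G s - G t = G s * (F t * G t) - (G s * F s) * G t := by
          rw [hfg, hgf, mul_one, one_mul]
      _ = G s * (F t - F s) * G t := by noncomm_ring
  have hFc : Filter.Tendsto F (nhds t) (nhds (F t)) := (hF t).continuousAt
  set c : ℝ := ‖G t‖ with hc
  have hc0 : 0 ≤ c := norm_nonneg _
  -- continuity of G at t
  have hGsub : Filter.Tendsto (fun s => G s - G t) (nhds t) (nhds 0) := by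
    apply squeeze_zero_norm' (a := fun s => 2 * (c + 1) ^ 2 * ‖F s - F t‖)
    · have hev : ∀ᶠ s in nhds t, ‖F s - F t‖ ≤ 1 / (2 * (c + 1)) := by
        have h1 : (0 : ℝ) < 1 / (2 * (c + 1)) := by positivity
        have := hFc
        rw [Metric.tendsto_nhds] at this
        filter_upwards [this _ h1] with s hs
        rw [dist_eq_norm] at hs
        exact le_of_lt hs
      filter_upwards [hev] with s hs
      have hd : ‖G s - G t‖ ≤ (c + ‖G s - G t‖) * ‖F s - F t‖ * c := by
        calc ‖G s - G t‖ = ‖G s * (F t - F s) * G t‖ := by rw [← hdiff]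
          _ ≤ ‖G s‖ * ‖F t - F s‖ * ‖G t‖ := by
              exact (norm_mul_le _ _).trans (by gcongr; exact norm_mul_le _ _)
          _ ≤ (c + ‖G s - G t‖) * ‖F s - F t‖ * c := by
              rw [norm_sub_rev (F t)]
              gcongr
              calc ‖G s‖ = ‖G t + (G s - G t)‖ := by rw [add_sub_cancel]
                _ ≤ c + ‖G s - G t‖ := norm_add_le _ _
      set d := ‖G s - G t‖
      set e := ‖F s - F t‖
      have hd0 : 0 ≤ d := norm_nonneg _
      have he0 : 0 ≤ e := norm_nonneg _
      have key : e * (2 * (c + 1)) ≤ 1 := by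
        have h2 : (0 : ℝ) < 2 * (c + 1) := by positivity
        calc e * (2 * (c + 1)) ≤ (1 / (2 * (c + 1))) * (2 * (c + 1)) := by gcongr
          _ = 1 := by field_simp
      nlinarith [mul_nonneg hd0 he0, mul_nonneg (mul_nonneg hd0 he0) hc0,
        mul_nonneg he0 hc0, mul_nonneg (mul_nonneg he0 hc0) hc0]
    · have : Filter.Tendsto (fun s => F s - F t) (nhds t) (nhds 0) := by
        have h2 := hFc.sub (tendsto_const_nhds (x := F t))
        simpa using h2
      have := this.norm
      simp only [norm_zero] at this
      simpa using this.const_mul (2 * (c + 1) ^ 2)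
  have hGc : Filter.Tendsto G (nhds t) (nhds (G t)) := by
    have := hGsub.add_const (G t)
    simpa using this
  -- slope computation
  rw [hasDerivAt_iff_tendsto_slope]
  have hslopeF : Filter.Tendsto (slope F t) (nhdsWithin t {t}ᶜ) (nhds (F' t)) :=
    hasDerivAt_iff_tendsto_slope.mp (hF t)
  have hmain : Filter.Tendsto (fun s => -(G s * slope F t s * G t))
      (nhdsWithin t {t}ᶜ) (nhds (-(G t * F' t * G t))) :=
    (((hGc.mono_left nhdsWithin_le_nhds).mul hslopeF).mul tendsto_const_nhds).neg
  refine hmain.congr' ?_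
  filter_upwards [self_mem_nhdsWithin] with s hs
  have hst : s ≠ t := hs
  rw [slope_def_module, slope_def_module, mul_smul_comm, smul_mul_assoc, ← smul_neg]
  congr 1
  calc -(G s * (F s - F t) * G t) = G s * (F t - F s) * G t := by noncomm_ring
    _ = G s - G t := (hdiff s).symm

end Aux

/-- Right-factor part of the Shiota-type factorization theorem:
if `F' = F·P − Pt·F` and `Q' = Q·P − Pt·Q` with `F` unit-valued (here `Pt` plays
the role of `P̃ = ∇γ(l̃)₊`), then `l̃ := Q·F⁻¹` satisfies the Lax-type flow
`l̃' = l̃·Pt − Pt·l̃ = [l̃, Pt]`. -/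
theorem shiota_factorization_right
    {𝔸 : Type*} [NormedRing 𝔸] [NormedAlgebra ℝ 𝔸]
    (F Q P Pt F' Q' : ℝ → 𝔸)
    (hF : ∀ t : ℝ, HasDerivAt F (F' t) t)
    (hQ : ∀ t : ℝ, HasDerivAt Q (Q' t) t)
    (hFu : ∀ t : ℝ, IsUnit (F t))
    (hF' : ∀ t : ℝ, F' t = F t * P t - Pt t * F t)
    (hQ' : ∀ t : ℝ, Q' t = Q t * P t - Pt t * Q t) :
    ∀ t : ℝ, HasDerivAt (fun s : ℝ => Q s * Ring.inverse (F s))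
      ((Q t * Ring.inverse (F t)) * Pt t - Pt t * (Q t * Ring.inverse (F t))) t := by
  intro t
  have hGd := inverse_curve_hasDerivAt F F' hF hFu t
  have h := (hQ t).mul hGd
  convert h using 1
  · rfl
  have hgf : Ring.inverse (F t) * F t = 1 := Ring.inverse_mul_cancel _ (hFu t)
  have hfg : F t * Ring.inverse (F t) = 1 := Ring.mul_inverse_cancel _ (hFu t)
  set g := Ring.inverse (F t)
  rw [hF', hQ']
  have e1 : g * (F t * P t - Pt t * F t) * g = P t * g - g * Pt t := by
    calc g * (F t * P t - Pt t * F t) * g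
        = (g * F t) * (P t * g) - (g * Pt t) * (F t * g) := by noncomm_ring
      _ = P t * g - g * Pt t := by rw [hgf, hfg, one_mul, mul_one]
  rw [e1]
  noncomm_ring
end

section
/- Forward direction of Proposition 2 / Proposition 5 of the paper: Let P, P̃ : ℝ → 𝔸 be curves in a unital normed algebra 𝔸 and let Φ, Ψ : ℝ → 𝔸 be differentiable curves with Φ unit-valued, satisfying the linear evolution equations Ψ'(t) = −P̃(t)·Ψ(t) and Φ'(t) = −P(t)·Φ(t) for all t ∈ ℝ. Then for any fixed element X̄ ∈ 𝔸 (constant in t), the curve X(t) := Ψ(t)·X̄·Φ(t)⁻¹ is differentiable and satisfies the factorized evolution equation X'(t) = X(t)·P(t) − P̃(t)·X(t) for all t ∈ ℝ. In particular this applies to X̄ = F̄ₙ and X̄ = Q̄ₙ₊ₚ, yielding the representations Fₙ = Ψ F̄ₙ Φ⁻¹ and Qₙ₊ₚ = Ψ Q̄ₙ₊ₚ Φ⁻¹ of solutions of the factorized Lax-type flows. -/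
open Filter Topology

/-- Derivative of the pointwise inverse of a unit-valued differentiable curve,
without any completeness assumption on the algebra. -/
theorem aux_inv_hasDerivAt {𝔸 : Type*} [NormedRing 𝔸] [NormedAlgebra ℝ 𝔸]
    (Φ : ℝ → 𝔸) (hΦu : ∀ t : ℝ, IsUnit (Φ t)) {t : ℝ} {D : 𝔸}
    (h : HasDerivAt Φ D t) :
    HasDerivAt (fun s => Ring.inverse (Φ s))
      (-(Ring.inverse (Φ t) * D * Ring.inverse (Φ t))) t := by
  set G : ℝ → 𝔸 := fun s => Ring.inverse (Φ s) with hGdef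
  have hmulinv : ∀ s, Φ s * G s = 1 := fun s => Ring.mul_inverse_cancel _ (hΦu s)
  have hinvmul : ∀ s, G s * Φ s = 1 := fun s => Ring.inverse_mul_cancel _ (hΦu s)
  have hid : ∀ s, G s - G t = G s * (Φ t - Φ s) * G t := by
    intro s
    have : G s * (Φ t - Φ s) * G t
        = G s * (Φ t * G t) - (G s * Φ s) * G t := by noncomm_ring
    rw [this, hmulinv, hinvmul, mul_one, one_mul]
  have hΦc : Tendsto (fun s => ‖Φ s - Φ t‖) (𝓝 t) (𝓝 0) := by
    have := (h.continuousAt.tendsto.sub_const (Φ t)).norm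
    simpa using this
  have hε : (0:ℝ) < (2 * (‖G t‖ + 1))⁻¹ := by positivity
  have hsmall : ∀ᶠ s in 𝓝 t, ‖Φ s - Φ t‖ < (2 * (‖G t‖ + 1))⁻¹ :=
    hΦc.eventually (eventually_lt_nhds hε)
  have hn3 : ∀ s, ‖G s - G t‖ ≤ ‖G s‖ * ‖Φ t - Φ s‖ * ‖G t‖ := by
    intro s
    rw [hid s]
    exact (norm_mul_le _ _).trans
      (mul_le_mul_of_nonneg_right (norm_mul_le _ _) (norm_nonneg _))
  have hbound : ∀ᶠ s in 𝓝 t, ‖G s‖ ≤ 2 * ‖G t‖ := by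
    filter_upwards [hsmall] with s hs
    have h1 := hn3 s
    have h2 : ‖Φ t - Φ s‖ * ‖G t‖ ≤ 1 / 2 := by
      rw [norm_sub_rev]
      have hle : ‖Φ s - Φ t‖ * ‖G t‖ ≤ (2 * (‖G t‖ + 1))⁻¹ * (‖G t‖ + 1) :=
        mul_le_mul hs.le (by linarith [norm_nonneg (G t)]) (norm_nonneg _) hε.le
      have heq2 : (2 * (‖G t‖ + 1))⁻¹ * (‖G t‖ + 1) = 1 / 2 := by
        field_simp
      linarith
    have h3 : ‖G s‖ ≤ ‖G t‖ + ‖G s - G t‖ := by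
      linarith [abs_le.mp (abs_norm_sub_norm_le (G s) (G t))]
    have h4 : ‖G s‖ * ‖Φ t - Φ s‖ * ‖G t‖ ≤ ‖G s‖ * (1/2) := by
      rw [mul_assoc]
      exact mul_le_mul_of_nonneg_left h2 (norm_nonneg _)
    nlinarith [norm_nonneg (G s)]
  have hGcont : Tendsto G (𝓝 t) (𝓝 (G t)) := by
    rw [tendsto_iff_norm_sub_tendsto_zero]
    have hbnd2 : ∀ᶠ s in 𝓝 t, ‖G s - G t‖ ≤ 2 * ‖G t‖ * ‖Φ t - Φ s‖ * ‖G t‖ := by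
      filter_upwards [hbound] with s hs
      refine (hn3 s).trans ?_
      gcongr
    have htend : Tendsto (fun s => 2 * ‖G t‖ * ‖Φ t - Φ s‖ * ‖G t‖) (𝓝 t) (𝓝 0) := by
      have h0 : Tendsto (fun s => ‖Φ t - Φ s‖) (𝓝 t) (𝓝 0) := by
        simpa [norm_sub_rev] using hΦc
      have := (h0.const_mul (2 * ‖G t‖)).mul_const ‖G t‖
      simpa using this
    exact squeeze_zero' (Eventually.of_forall fun s => norm_nonneg _) hbnd2 htend
  rw [hasDerivAt_iff_tendsto_slope] at h ⊢
  have hGc : Tendsto G (𝓝[≠] t) (𝓝 (G t)) := hGcont.mono_left nhdsWithin_le_nhds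
  have hlim : Tendsto (fun s => G s * (-(slope Φ t s)) * G t) (𝓝[≠] t)
      (𝓝 (G t * (-D) * G t)) := (hGc.mul h.neg).mul tendsto_const_nhds
  have heq : ∀ s, slope G t s = G s * (-(slope Φ t s)) * G t := by
    intro s
    rw [slope_def_module, slope_def_module, hid s,
      show G s * (Φ t - Φ s) * G t = -(G s * (Φ s - Φ t) * G t) by noncomm_ring,
      smul_neg, mul_neg, neg_mul, mul_smul_comm, smul_mul_assoc]
  have : Tendsto (slope G t) (𝓝[≠] t) (𝓝 (G t * (-D) * G t)) := by
    simpa only [← heq] using hlim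
  simpa [mul_neg, neg_mul] using this

/-- Forward direction of Proposition 2 / Proposition 5: if `Ψ' = −Pt·Ψ` and
`Φ' = −P·Φ` with `Φ` unit-valued, then for any constant element `Xbar ∈ 𝔸` the
curve `X := Ψ·Xbar·Φ⁻¹` satisfies the factorized evolution equation
`X' = X·P − Pt·X`.  (In particular `Xbar = F̄ₙ, Q̄ₙ₊ₚ` give the representations
`Fₙ = Ψ F̄ₙ Φ⁻¹`, `Qₙ₊ₚ = Ψ Q̄ₙ₊ₚ Φ⁻¹`.) -/
theorem dressed_constant_solves_factorized_flow
    {𝔸 : Type*} [NormedRing 𝔸] [NormedAlgebra ℝ 𝔸]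
    (P Pt Φ Ψ : ℝ → 𝔸)
    (hΦu : ∀ t : ℝ, IsUnit (Φ t))
    (hΨ : ∀ t : ℝ, HasDerivAt Ψ (-(Pt t * Ψ t)) t)
    (hΦ : ∀ t : ℝ, HasDerivAt Φ (-(P t * Φ t)) t)
    (Xbar : 𝔸) :
    ∀ t : ℝ, HasDerivAt (fun s : ℝ => Ψ s * Xbar * Ring.inverse (Φ s))
      ((Ψ t * Xbar * Ring.inverse (Φ t)) * P t
        - Pt t * (Ψ t * Xbar * Ring.inverse (Φ t))) t := by
  intro t
  have hinv := aux_inv_hasDerivAt Φ hΦu (hΦ t)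
  have hfg := ((hΨ t).mul_const Xbar).mul hinv
  convert hfg using 1
  case e'_8 => rfl
  have h1 : Φ t * Ring.inverse (Φ t) = 1 := Ring.mul_inverse_cancel _ (hΦu t)
  have h2 : Ring.inverse (Φ t) * -(P t * Φ t) * Ring.inverse (Φ t)
      = -(Ring.inverse (Φ t) * P t) := by
    rw [mul_neg, neg_mul, mul_assoc, mul_assoc, h1, mul_one]
  rw [h2]
  noncomm_ring
end

section
/- Converse direction of Proposition 2 / Proposition 5 of the paper (constancy of the dressed factor): Let P, P̃ : ℝ → 𝔸 be curves in a unital normed algebra 𝔸, let X : ℝ → 𝔸 be differentiable with X'(t) = X(t)·P(t) − P̃(t)·X(t) for all t, and let Φ, Ψ : ℝ → 𝔸 be differentiable unit-valued curves with Φ'(t) = −P(t)·Φ(t) and Ψ'(t) = −P̃(t)·Ψ(t) for all t. Then the curve t ↦ Ψ(t)⁻¹·X(t)·Φ(t) has derivative zero at every t ∈ ℝ, hence is constant: Ψ(t)⁻¹·X(t)·Φ(t) = Ψ(0)⁻¹·X(0)·Φ(0) for all t ∈ ℝ. -/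
open Asymptotics Filter Topology

section aux
variable {𝔸 : Type*} [NormedRing 𝔸] [NormedAlgebra ℝ 𝔸]

/-- Algebraic key identity for differences of inverses. -/
lemma inv_sub_inv_eq {Ψ : ℝ → 𝔸} (hΨu : ∀ s, IsUnit (Ψ s)) (s t : ℝ) :
    Ring.inverse (Ψ s) - Ring.inverse (Ψ t)
      = Ring.inverse (Ψ s) * (Ψ t - Ψ s) * Ring.inverse (Ψ t) := by
  have h1 : Ψ t * Ring.inverse (Ψ t) = 1 := Ring.mul_inverse_cancel _ (hΨu t)
  have h2 : Ring.inverse (Ψ s) * Ψ s = 1 := Ring.inverse_mul_cancel _ (hΨu s)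
  have : Ring.inverse (Ψ s) * (Ψ t - Ψ s) * Ring.inverse (Ψ t)
      = Ring.inverse (Ψ s) * (Ψ t * Ring.inverse (Ψ t))
        - (Ring.inverse (Ψ s) * Ψ s) * Ring.inverse (Ψ t) := by noncomm_ring
  rw [this, h1, h2, mul_one, one_mul]

/-- Continuity of the inverse along a unit-valued continuous curve. -/
lemma inv_tendsto {Ψ : ℝ → 𝔸} (hΨu : ∀ s, IsUnit (Ψ s))
    (t : ℝ) (hc : ContinuousAt Ψ t) :
    Tendsto (fun s => Ring.inverse (Ψ s) - Ring.inverse (Ψ t)) (𝓝 t) (𝓝 0) := by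
  set c := ‖Ring.inverse (Ψ t)‖ with hc0
  have hε : Tendsto (fun s => ‖Ψ t - Ψ s‖) (𝓝 t) (𝓝 0) := by
    have : Tendsto (fun s => Ψ t - Ψ s) (𝓝 t) (𝓝 (Ψ t - Ψ t)) :=
      (tendsto_const_nhds.sub hc)
    simpa using this.norm
  have hev : ∀ᶠ s in 𝓝 t, ‖Ψ t - Ψ s‖ * c ≤ 1/2 := by
    have h2 : Tendsto (fun s => ‖Ψ t - Ψ s‖ * c) (𝓝 t) (𝓝 0) := by
      simpa using hε.mul_const c
    exact (h2.eventually (eventually_lt_nhds (by norm_num : (0:ℝ) < 1/2))).mono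
      fun s hs => hs.le
  have hbound : ∀ᶠ s in 𝓝 t,
      ‖Ring.inverse (Ψ s) - Ring.inverse (Ψ t)‖ ≤ 2 * c^2 * ‖Ψ t - Ψ s‖ := by
    refine hev.mono fun s hs => ?_
    have ha : ‖Ring.inverse (Ψ s)‖
        ≤ ‖Ring.inverse (Ψ s) - Ring.inverse (Ψ t)‖ + c := by
      have := norm_sub_norm_le (Ring.inverse (Ψ s)) (Ring.inverse (Ψ t))
      linarith
    have hkey : ‖Ring.inverse (Ψ s) - Ring.inverse (Ψ t)‖
        ≤ (‖Ring.inverse (Ψ s) - Ring.inverse (Ψ t)‖ + c) * ‖Ψ t - Ψ s‖ * c := by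
      calc ‖Ring.inverse (Ψ s) - Ring.inverse (Ψ t)‖
          = ‖Ring.inverse (Ψ s) * (Ψ t - Ψ s) * Ring.inverse (Ψ t)‖ := by
            rw [inv_sub_inv_eq hΨu]
        _ ≤ ‖Ring.inverse (Ψ s) * (Ψ t - Ψ s)‖ * c := norm_mul_le _ _
        _ ≤ ‖Ring.inverse (Ψ s)‖ * ‖Ψ t - Ψ s‖ * c :=
            mul_le_mul_of_nonneg_right (norm_mul_le _ _) (norm_nonneg _)
        _ ≤ _ := by
            have h1 : (0:ℝ) ≤ ‖Ψ t - Ψ s‖ := norm_nonneg _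
            have h2 : (0:ℝ) ≤ c := norm_nonneg _
            exact mul_le_mul_of_nonneg_right
              (mul_le_mul_of_nonneg_right ha h1) h2
    have hd : 0 ≤ ‖Ring.inverse (Ψ s) - Ring.inverse (Ψ t)‖ := norm_nonneg _
    have he : 0 ≤ ‖Ψ t - Ψ s‖ := norm_nonneg _
    nlinarith [mul_le_mul_of_nonneg_left hs hd]
  have hlim : Tendsto (fun s => 2 * c^2 * ‖Ψ t - Ψ s‖) (𝓝 t) (𝓝 0) := by
    simpa using hε.const_mul (2 * c^2)
  exact squeeze_zero_norm' hbound hlim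

/-- Derivative of the inverse along a unit-valued differentiable curve
(no completeness needed). -/
lemma hasDerivAt_inv_curve {Ψ : ℝ → 𝔸} {Ψ' : 𝔸} (hΨu : ∀ s, IsUnit (Ψ s))
    (t : ℝ) (hΨ : HasDerivAt Ψ Ψ' t) :
    HasDerivAt (fun s => Ring.inverse (Ψ s))
      (-(Ring.inverse (Ψ t) * Ψ' * Ring.inverse (Ψ t))) t := by
  set f := fun s => Ring.inverse (Ψ s) with hf
  set D := -(Ring.inverse (Ψ t) * Ψ' * Ring.inverse (Ψ t)) with hD
  rw [hasDerivAt_iff_isLittleO]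
  have hg : HasDerivAt (fun s => f t * (Ψ t - Ψ s) * f t) D t := by
    have h1 : HasDerivAt (fun s => Ψ t - Ψ s) (-Ψ') t := by
      have h := (hasDerivAt_const t (Ψ t)).sub hΨ
      simp only [zero_sub] at h
      exact h
    have := (h1.const_mul (f t)).mul_const (f t)
    simpa [hD, mul_assoc] using this
  have hgo : (fun s => f t * (Ψ t - Ψ s) * f t - (s - t) • D) =o[𝓝 t]
      fun s => s - t := by
    have := hasDerivAt_iff_isLittleO.mp hg
    simpa using this
  have hro : (fun s => (f s - f t) * (Ψ t - Ψ s) * f t) =o[𝓝 t]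
      fun s => s - t := by
    have h1 : (fun s => f s - f t) =o[𝓝 t] (fun _ => (1:ℝ)) :=
      (isLittleO_one_iff ℝ).2 (inv_tendsto hΨu t hΨ.continuousAt)
    have h2 : (fun s => Ψ t - Ψ s) =O[𝓝 t] fun s => s - t := by
      simpa using hΨ.isBigO_sub.neg_left
    have h3 : (fun s => (f s - f t) * (Ψ t - Ψ s)) =o[𝓝 t]
        fun s => (1:ℝ) * (s - t) := h1.mul_isBigO h2
    have h4 := h3.mul_isBigO (isBigO_const_const (f t) (one_ne_zero' ℝ) (𝓝 t))
    have h5 : (fun s => (1:ℝ) * (s - t) * 1) =O[𝓝 t] fun s => s - t := by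
      apply isBigO_of_le
      intro s; simp
    exact h4.trans_isBigO h5
  have heq : ∀ s, f s - f t - (s - t) • D
      = (f s - f t) * (Ψ t - Ψ s) * f t + (f t * (Ψ t - Ψ s) * f t - (s - t) • D) := by
    intro s
    have h6 : f s - f t = (f s - f t) * (Ψ t - Ψ s) * f t + f t * (Ψ t - Ψ s) * f t :=
      calc f s - f t = f s * (Ψ t - Ψ s) * f t := inv_sub_inv_eq hΨu s t
        _ = (f s - f t) * (Ψ t - Ψ s) * f t + f t * (Ψ t - Ψ s) * f t := by
            rw [sub_mul, sub_mul]; abel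
    nth_rewrite 1 [h6]
    abel
  calc (fun s => f s - f t - (s - t) • D)
      = fun s => (f s - f t) * (Ψ t - Ψ s) * f t
          + (f t * (Ψ t - Ψ s) * f t - (s - t) • D) := funext heq
    _ =o[𝓝 t] fun s => s - t := hro.add hgo

end aux

/-- Converse direction of Proposition 2 / Proposition 5 (constancy of the
dressed factor): if `X' = X·P − Pt·X`, `Φ' = −P·Φ` and `Ψ' = −Pt·Ψ` with `Φ, Ψ`
unit-valued, then `t ↦ Ψ(t)⁻¹·X(t)·Φ(t)` has zero derivative everywhere, hence
is constant. -/
theorem dressed_factor_is_constant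
    {𝔸 : Type*} [NormedRing 𝔸] [NormedAlgebra ℝ 𝔸]
    (P Pt X Φ Ψ : ℝ → 𝔸) (X' : ℝ → 𝔸)
    (hX : ∀ t : ℝ, HasDerivAt X (X' t) t)
    (hX' : ∀ t : ℝ, X' t = X t * P t - Pt t * X t)
    (hΦu : ∀ t : ℝ, IsUnit (Φ t)) (hΨu : ∀ t : ℝ, IsUnit (Ψ t))
    (hΦ : ∀ t : ℝ, HasDerivAt Φ (-(P t * Φ t)) t)
    (hΨ : ∀ t : ℝ, HasDerivAt Ψ (-(Pt t * Ψ t)) t) :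
    (∀ t : ℝ, HasDerivAt (fun s : ℝ => Ring.inverse (Ψ s) * X s * Φ s) 0 t) ∧
    (∀ t : ℝ, Ring.inverse (Ψ t) * X t * Φ t
        = Ring.inverse (Ψ 0) * X 0 * Φ 0) := by
  have hzero : ∀ t : ℝ,
      HasDerivAt (fun s : ℝ => Ring.inverse (Ψ s) * X s * Φ s) 0 t := by
    intro t
    have hinv := hasDerivAt_inv_curve hΨu t (hΨ t)
    have hF := (hinv.mul (hX t)).mul (hΦ t)
    convert hF using 1
    · rfl
    have h1 : Ψ t * Ring.inverse (Ψ t) = 1 := Ring.mul_inverse_cancel _ (hΨu t)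
    have h2 : -(Ring.inverse (Ψ t) * -(Pt t * Ψ t) * Ring.inverse (Ψ t))
        = Ring.inverse (Ψ t) * Pt t := by
      have h3 : Ring.inverse (Ψ t) * -(Pt t * Ψ t) * Ring.inverse (Ψ t)
          = -(Ring.inverse (Ψ t) * Pt t * (Ψ t * Ring.inverse (Ψ t))) := by
        noncomm_ring
      rw [h3, h1, mul_one, neg_neg]
    rw [h2, hX' t]
    simp only [Pi.mul_apply]
    noncomm_ring
  refine ⟨hzero, fun t => ?_⟩
  exact is_const_of_deriv_eq_zero (fun s => (hzero s).differentiableAt)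
    (fun s => (hzero s).deriv) t 0
end

section
/- Existence part of Proposition 2 of the paper: Let 𝔸 be a unital Banach algebra over ℝ and let A : ℝ → 𝔸 be a continuous curve. Then there exists a differentiable curve Φ : ℝ → 𝔸 with Φ(0) = 1, satisfying the linear evolution equation Φ'(t) = −A(t)·Φ(t) for all t ∈ ℝ, and such that Φ(t) is a unit of 𝔸 for every t ∈ ℝ. -/
open intervalIntegral MeasureTheory Set

noncomputable def picardSeq {𝔸 : Type*} [NormedRing 𝔸] [NormedAlgebra ℝ 𝔸]
    (A : ℝ → 𝔸) : ℕ → ℝ → 𝔸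
  | 0 => fun _ => 1
  | (n+1) => fun t => -∫ s in (0:ℝ)..t, A s * picardSeq A n s

section
variable {𝔸 : Type*} [NormedRing 𝔸] [NormedAlgebra ℝ 𝔸] [CompleteSpace 𝔸] {A : ℝ → 𝔸}

lemma picardSeq_cont (hA : Continuous A) : ∀ n, Continuous (picardSeq A n)
  | 0 => continuous_const
  | (n+1) => by
    have hg : Continuous fun s => A s * picardSeq A n s := hA.mul (picardSeq_cont hA n)
    have h : ∀ t : ℝ, HasDerivAt (fun u => ∫ s in (0:ℝ)..u, A s * picardSeq A n s)
        (A t * picardSeq A n t) t := fun t =>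
      integral_hasDerivAt_right (hg.intervalIntegrable _ _)
        (hg.stronglyMeasurable.stronglyMeasurableAtFilter) hg.continuousAt
    exact (continuous_iff_continuousAt.2 fun t => (h t).continuousAt).neg

lemma abs_integral_abs_pow (n : ℕ) (t : ℝ) :
    |∫ s in (0:ℝ)..t, |s| ^ n| = |t| ^ (n+1) / (n+1) := by
  rcases le_total 0 t with ht | ht
  · rw [integral_congr (g := fun s => s ^ n) (fun s hs => by
      rw [uIcc_of_le ht] at hs
      simp [abs_of_nonneg hs.1]), integral_pow]
    rw [zero_pow (Nat.succ_ne_zero n), sub_zero, abs_of_nonneg ht,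
      abs_of_nonneg (div_nonneg (pow_nonneg ht _) (by positivity))]
  · have h1 : (∫ s in (0:ℝ)..t, |s| ^ n) = ∫ s in (-t)..(0:ℝ), |s| ^ n := by
      have h2 := integral_comp_neg (a := (0:ℝ)) (b := t) (fun s => |s| ^ n)
      simpa using h2
    rw [h1, integral_congr (g := fun s => s ^ n) (fun s hs => by
      rw [uIcc_of_ge (by linarith : (0:ℝ) ≤ -t)] at hs
      simp [abs_of_nonneg hs.1]), integral_pow]
    rw [abs_of_nonpos ht, zero_pow (Nat.succ_ne_zero n), zero_sub, abs_div, abs_neg,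
      abs_of_nonneg (pow_nonneg (by linarith) _),
      abs_of_nonneg (by positivity : (0:ℝ) ≤ (n:ℝ) + 1)]
variable {𝔸 : Type*} [NormedRing 𝔸] [NormedAlgebra ℝ 𝔸] [CompleteSpace 𝔸] {A : ℝ → 𝔸}

lemma picardSeq_bound (hA : Continuous A) {r M : ℝ} (hM0 : 0 ≤ M)
    (hM : ∀ s ∈ Icc (-r) r, ‖A s‖ ≤ M) :
    ∀ n, ∀ t ∈ Icc (-r) r, ‖picardSeq A n t‖ ≤ ‖(1:𝔸)‖ * ((M * |t|) ^ n / n.factorial)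
  | 0 => fun t _ => by simp [picardSeq]
  | (n+1) => fun t ht => by
    have hr0 : (0:ℝ) ≤ r := by rcases ht with ⟨h1, h2⟩; linarith
    have hsub : uIoc (0:ℝ) t ⊆ Icc (-r) r :=
      fun s hs => uIcc_subset_Icc ⟨by linarith, hr0⟩ ht (uIoc_subset_uIcc hs)
    have key : ‖picardSeq A (n+1) t‖ = ‖∫ s in (0:ℝ)..t, A s * picardSeq A n s‖ := by
      rw [show picardSeq A (n+1) t = -∫ s in (0:ℝ)..t, A s * picardSeq A n s from rfl,
        norm_neg]
    set C : ℝ := M ^ (n+1) * ‖(1:𝔸)‖ / n.factorial with hC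
    have hC0 : 0 ≤ C := by positivity
    have hle : ‖∫ s in (0:ℝ)..t, A s * picardSeq A n s‖ ≤ |∫ s in (0:ℝ)..t, C * |s| ^ n| := by
      apply intervalIntegral.norm_integral_le_abs_of_norm_le
      · refine (ae_restrict_iff' measurableSet_uIoc).2 (ae_of_all _ fun s hs => ?_)
        have hb := picardSeq_bound hA hM0 hM n s (hsub hs)
        calc ‖A s * picardSeq A n s‖ ≤ ‖A s‖ * ‖picardSeq A n s‖ := norm_mul_le _ _
          _ ≤ M * (‖(1:𝔸)‖ * ((M * |s|) ^ n / n.factorial)) := by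
              apply mul_le_mul (hM s (hsub hs)) hb (norm_nonneg _) hM0
          _ = C * |s| ^ n := by rw [hC, mul_pow]; ring
      · exact ((continuous_const.mul ((continuous_abs).pow n)).intervalIntegrable _ _)
    have hint : |∫ s in (0:ℝ)..t, C * |s| ^ n| = C * (|t| ^ (n+1) / (n+1)) := by
      rw [intervalIntegral.integral_const_mul, abs_mul, abs_of_nonneg hC0, abs_integral_abs_pow]
    rw [key]
    refine hle.trans ?_
    rw [hint, hC]
    rw [show ((n+1).factorial : ℝ) = (n+1) * n.factorial by exact_mod_cast Nat.factorial_succ n]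
    have hfac : (0:ℝ) < n.factorial := by positivity
    rw [mul_pow]
    apply le_of_eq
    field_simp

lemma exists_norm_bound (hA : Continuous A) (r : ℝ) :
    ∃ M : ℝ, 0 ≤ M ∧ ∀ s ∈ Icc (-r) r, ‖A s‖ ≤ M := by
  obtain ⟨M, hM⟩ := (isCompact_Icc (a := -r) (b := r)).exists_bound_of_continuousOn
    hA.continuousOn
  exact ⟨max M 0, le_max_right _ _, fun s hs => (hM s hs).trans (le_max_left _ _)⟩

theorem exists_evolution (A : ℝ → 𝔸) (hA : Continuous A) :
    ∃ Φ : ℝ → 𝔸, Φ 0 = 1 ∧ Continuous Φ ∧ ∀ t, HasDerivAt Φ (-(A t * Φ t)) t := by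
  classical
  set Φ : ℝ → 𝔸 := fun t => ∑' n, picardSeq A n t with hΦdef
  have hsum : ∀ t : ℝ, Summable fun n => picardSeq A n t := by
    intro t
    obtain ⟨M, hM0, hM⟩ := exists_norm_bound hA |t|
    refine Summable.of_norm (Summable.of_nonneg_of_le (fun n => norm_nonneg _)
      (fun n => picardSeq_bound hA hM0 hM n t ⟨neg_abs_le t, le_abs_self t⟩) ?_)
    exact (Real.summable_pow_div_factorial (M * |t|)).mul_left _
  have hΦs : ∀ t, HasSum (fun n => picardSeq A n t) (Φ t) := fun t => (hsum t).hasSum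
  -- continuity
  have hΦc : Continuous Φ := by
    rw [continuous_iff_continuousAt]
    intro t
    obtain ⟨M, hM0, hM⟩ := exists_norm_bound hA (|t| + 1)
    have hco : ContinuousOn Φ (Icc (-(|t|+1)) (|t|+1)) := by
      refine continuousOn_tsum (fun n => (picardSeq_cont hA n).continuousOn)
        ((Real.summable_pow_div_factorial (M * (|t|+1))).mul_left ‖(1:𝔸)‖) ?_
      intro n x hx
      refine (picardSeq_bound hA hM0 hM n x hx).trans ?_
      have hax : |x| ≤ |t| + 1 := abs_le.2 ⟨hx.1, hx.2⟩
      have hmm : M * |x| ≤ M * (|t| + 1) := mul_le_mul_of_nonneg_left hax hM0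
      gcongr
    exact hco.continuousAt
      (Icc_mem_nhds (by linarith [neg_abs_le t]) (by linarith [le_abs_self t]))
  -- integral identity
  have key : ∀ t : ℝ, (∫ s in (0:ℝ)..t, A s * Φ s) = 1 - Φ t := by
    intro t
    obtain ⟨M, hM0, hM⟩ := exists_norm_bound hA |t|
    have hsub : uIoc (0:ℝ) t ⊆ Icc (-|t|) |t| := fun s hs =>
      uIcc_subset_Icc ⟨neg_nonpos.2 (abs_nonneg t), abs_nonneg t⟩
        ⟨neg_abs_le t, le_abs_self t⟩ (uIoc_subset_uIcc hs)
    have hs1 : HasSum (fun n => ∫ s in (0:ℝ)..t, A s * picardSeq A n s)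
        (∫ s in (0:ℝ)..t, A s * Φ s) := by
      refine intervalIntegral.hasSum_integral_of_dominated_convergence
        (bound := fun n _ => M * (‖(1:𝔸)‖ * ((M * |t|) ^ n / n.factorial)))
        (fun n => (hA.mul (picardSeq_cont hA n)).aestronglyMeasurable) ?_ ?_ ?_ ?_
      · intro n
        refine Filter.Eventually.of_forall fun s hs => ?_
        have hb := picardSeq_bound hA hM0 hM n s (hsub hs)
        have habs : |s| ≤ |t| := by
          have := hsub hs
          exact abs_le.2 ⟨this.1, this.2⟩
        calc ‖A s * picardSeq A n s‖ ≤ ‖A s‖ * ‖picardSeq A n s‖ := norm_mul_le _ _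
          _ ≤ M * (‖(1:𝔸)‖ * ((M * |s|) ^ n / n.factorial)) :=
              mul_le_mul (hM s (hsub hs)) hb (norm_nonneg _) hM0
          _ ≤ M * (‖(1:𝔸)‖ * ((M * |t|) ^ n / n.factorial)) := by
              have : M * |s| ≤ M * |t| := mul_le_mul_of_nonneg_left habs hM0
              gcongr
      · exact Filter.Eventually.of_forall fun s _ =>
          (((Real.summable_pow_div_factorial (M * |t|)).mul_left _).mul_left _)
      · exact continuous_const.intervalIntegrable _ _
      · exact Filter.Eventually.of_forall fun s _ => (hΦs s).mul_left (A s)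
    have hs2 : HasSum (fun n => ∫ s in (0:ℝ)..t, A s * picardSeq A n s) (1 - Φ t) := by
      have h1 : HasSum (fun n => picardSeq A (n+1) t) (Φ t - 1) := by
        refine (hasSum_nat_add_iff (f := fun n => picardSeq A n t) 1).2 ?_
        simpa [picardSeq] using hΦs t
      have h2 := h1.neg
      rw [neg_sub] at h2
      have h3 : (fun n => ∫ s in (0:ℝ)..t, A s * picardSeq A n s)
          = fun n => -(picardSeq A (n+1) t) := by
        funext n
        rw [show picardSeq A (n+1) t = -∫ s in (0:ℝ)..t, A s * picardSeq A n s from rfl,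
          neg_neg]
      rw [h3]
      exact h2
    exact hs1.unique hs2
  have hΦeq : ∀ u : ℝ, Φ u = 1 - ∫ s in (0:ℝ)..u, A s * Φ s := by
    intro u; rw [key u]; simp
  have hΦ0 : Φ 0 = 1 := by
    rw [hΦeq 0, intervalIntegral.integral_same, sub_zero]
  refine ⟨Φ, hΦ0, hΦc, fun t => ?_⟩
  have hg : Continuous fun s => A s * Φ s := hA.mul hΦc
  have h1 : HasDerivAt (fun u => ∫ s in (0:ℝ)..u, A s * Φ s) (A t * Φ t) t :=
    intervalIntegral.integral_hasDerivAt_right (hg.intervalIntegrable _ _)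
      hg.stronglyMeasurable.stronglyMeasurableAtFilter hg.continuousAt
  have h2 := (hasDerivAt_const t (1:𝔸)).sub h1
  rw [zero_sub] at h2
  exact h2.congr_of_eventuallyEq (Filter.Eventually.of_forall fun u => hΦeq u)

theorem exists_fundamental_solution'
    (A : ℝ → 𝔸) (hA : Continuous A) :
    ∃ Φ : ℝ → 𝔸, Φ 0 = 1 ∧
      (∀ t : ℝ, HasDerivAt Φ (-(A t * Φ t)) t) ∧
      (∀ t : ℝ, IsUnit (Φ t)) := by
  obtain ⟨Φ, hΦ0, hΦc, hΦ'⟩ := exists_evolution A hA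
  have hA' : Continuous fun t => -(MulOpposite.op (A t)) :=
    (MulOpposite.continuous_op.comp hA).neg
  obtain ⟨ψ, hψ0, hψc, hψ'⟩ :=
    exists_evolution (𝔸 := 𝔸ᵐᵒᵖ) (fun t => -(MulOpposite.op (A t))) hA'
  set L : 𝔸ᵐᵒᵖ →L[ℝ] 𝔸 :=
    ((MulOpposite.opContinuousLinearEquiv ℝ (M := 𝔸)).symm : 𝔸ᵐᵒᵖ →L[ℝ] 𝔸) with hL
  set Ψ : ℝ → 𝔸 := fun t => (ψ t).unop with hΨdef
  have hΨ' : ∀ t, HasDerivAt Ψ (Ψ t * A t) t := by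
    intro t
    have h := L.hasFDerivAt.comp_hasDerivAt t (hψ' t)
    simpa [hL, hΨdef, MulOpposite.opContinuousLinearEquiv_symm_apply, Function.comp_def, mul_comm] using h
  have hΨc : Continuous Ψ := MulOpposite.continuous_unop.comp hψc
  have hΨ0 : Ψ 0 = 1 := by simp [hΨdef, hψ0]
  have hleft : ∀ t, Ψ t * Φ t = 1 := by
    intro t
    have hD : ∀ u : ℝ, HasDerivAt (fun x => Ψ x * Φ x) 0 u := by
      intro u
      have h := (hΨ' u).mul (hΦ' u)
      have h0 : Ψ u * A u * Φ u + Ψ u * -(A u * Φ u) = 0 := by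
        rw [mul_neg, mul_assoc, add_neg_cancel]
      rwa [h0] at h
    have hconst := is_const_of_deriv_eq_zero (𝕜 := ℝ) (f := fun x => Ψ x * Φ x)
      (fun u => (hD u).differentiableAt) (fun u => (hD u).deriv) t 0
    rw [hΦ0, hΨ0, mul_one] at hconst
    exact hconst
  have hright : ∀ t, Φ t * Ψ t = 1 := by
    intro t
    set r : ℝ := |t| + 1 with hr
    have hr0 : (0:ℝ) < r := by positivity
    obtain ⟨M, hM0, hM⟩ := exists_norm_bound hA r
    set B : ℝ → 𝔸 := fun s => A (max (-r) (min r s)) with hB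
    have hBmem : ∀ s, max (-r) (min r s) ∈ Icc (-r) r := fun s =>
      ⟨le_max_left _ _, max_le (by linarith) (min_le_left _ _)⟩
    have hBA : ∀ s ∈ Icc (-r) r, B s = A s := by
      intro s hs
      show A (max (-r) (min r s)) = A s
      rw [min_eq_right hs.2, max_eq_right hs.1]
    have hBnorm : ∀ s, ‖B s‖ ≤ M := fun s => hM _ (hBmem s)
    set v : ℝ → 𝔸 → 𝔸 := fun s x => x * B s - B s * x with hv
    have hlip : ∀ s : ℝ, LipschitzOnWith (2*M).toNNReal (v s) Set.univ := by
      intro s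
      apply LipschitzWith.lipschitzOnWith
      apply LipschitzWith.of_dist_le_mul
      intro x y
      rw [dist_eq_norm, dist_eq_norm]
      have hxy : v s x - v s y = (x - y) * B s - B s * (x - y) := by
        simp only [hv]
        noncomm_ring
      rw [hxy]
      calc ‖(x-y) * B s - B s * (x-y)‖ ≤ ‖(x-y) * B s‖ + ‖B s * (x-y)‖ := norm_sub_le _ _
        _ ≤ ‖x-y‖ * ‖B s‖ + ‖B s‖ * ‖x-y‖ := add_le_add (norm_mul_le _ _) (norm_mul_le _ _)
        _ ≤ ‖x-y‖ * M + M * ‖x-y‖ :=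
            add_le_add (mul_le_mul_of_nonneg_left (hBnorm s) (norm_nonneg _))
              (mul_le_mul_of_nonneg_right (hBnorm s) (norm_nonneg _))
        _ = ((2*M).toNNReal : ℝ) * ‖x-y‖ := by
            rw [Real.coe_toNNReal _ (by linarith)]; ring
    have hΘc : Continuous fun u => Φ u * Ψ u := hΦc.mul hΨc
    have huniq := ODE_solution_unique_of_mem_Icc (v := v) (s := fun _ => Set.univ)
      (K := (2*M).toNNReal) (fun s _ => hlip s) (t₀ := 0) (a := -r) (b := r)
      ⟨by linarith, hr0⟩ hΘc.continuousOn
      (fun u hu => by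
        have h := (hΦ' u).mul (hΨ' u)
        have he : -(A u * Φ u) * Ψ u + Φ u * (Ψ u * A u)
            = v u (Φ u * Ψ u) := by
          simp only [hv]
          rw [hBA u (Ioo_subset_Icc_self hu)]
          noncomm_ring
        rwa [he] at h)
      (fun u _ => Set.mem_univ _)
      continuousOn_const
      (fun u hu => by
        have h0 : v u ((fun _ : ℝ => (1:𝔸)) u) = 0 := by simp [hv]
        exact h0 ▸ hasDerivAt_const u (1:𝔸))
      (fun u _ => Set.mem_univ _)
      (by simp [hΦ0, hΨ0])
    have ht : t ∈ Icc (-r) r :=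
      ⟨by simp only [hr]; linarith [neg_abs_le t], by simp only [hr]; linarith [le_abs_self t]⟩
    exact huniq ht
  exact ⟨Φ, hΦ0, hΦ', fun t => ⟨⟨Φ t, Ψ t, hright t, hleft t⟩, rfl⟩⟩
end

/-- Existence part of Proposition 2: in a unital real Banach algebra, for any
continuous curve `A : ℝ → 𝔸` there exists a differentiable curve `Φ` with
`Φ(0) = 1`, solving the linear evolution equation `Φ' = −A·Φ`, whose values
are units of `𝔸`. -/
theorem exists_fundamental_solution
    {𝔸 : Type*} [NormedRing 𝔸] [NormedAlgebra ℝ 𝔸] [CompleteSpace 𝔸]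
    (A : ℝ → 𝔸) (hA : Continuous A) :
    ∃ Φ : ℝ → 𝔸, Φ 0 = 1 ∧
      (∀ t : ℝ, HasDerivAt Φ (-(A t * Φ t)) t) ∧
      (∀ t : ℝ, IsUnit (Φ t)) := by
  exact exists_fundamental_solution' A hA
end

section
/- Full statement of Proposition 2 / Proposition 5 of the paper: Let 𝔸 be a unital Banach algebra over ℝ, let P, P̃ : ℝ → 𝔸 be continuous curves, and let F, Q : ℝ → 𝔸 be differentiable curves satisfying the factorized evolution equations F'(t) = F(t)·P(t) − P̃(t)·F(t) and Q'(t) = Q(t)·P(t) − P̃(t)·Q(t) for all t ∈ ℝ. Then there exist differentiable unit-valued curves Φ, Ψ : ℝ → 𝔸 with Φ(0) = Ψ(0) = 1, satisfying Φ'(t) = −P(t)·Φ(t) and Ψ'(t) = −P̃(t)·Ψ(t), such that F(t) = Ψ(t)·F(0)·Φ(t)⁻¹ and Q(t) = Ψ(t)·Q(0)·Φ(t)⁻¹ for all t ∈ ℝ; i.e., the elements F̄ = F(0) and Q̄ = Q(0) are constant with respect to the evolution parameter t. -/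
open MeasureTheory intervalIntegral Filter Topology Set Finset

namespace FactorizedFlowAux

variable {𝔸 : Type*} [NormedRing 𝔸] [NormedAlgebra ℝ 𝔸] [CompleteSpace 𝔸]

/-- Picard iteration for the linear ODE `Φ' = A·Φ`, `Φ 0 = 1`. -/
noncomputable def picard (A : ℝ → 𝔸) : ℕ → ℝ → 𝔸
  | 0 => fun _ => 1
  | (n + 1) => fun t => 1 + ∫ s in (0:ℝ)..t, A s * picard A n s

lemma picard_continuous (A : ℝ → 𝔸) (hA : Continuous A) : ∀ n, Continuous (picard A n) := by
  intro n
  induction n with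
  | zero => exact continuous_const
  | succ n ih =>
    exact continuous_const.add (intervalIntegral.continuous_primitive
      (fun a b => (hA.mul ih).intervalIntegrable a b) 0)

lemma abs_le_of_mem_uIoc {x t : ℝ} (hx : x ∈ Set.uIoc (0:ℝ) t) : |x| ≤ |t| := by
  rcases hx with ⟨h1, h2⟩
  refine abs_le.2 ⟨?_, le_trans h2 (max_le (abs_nonneg t) (le_abs_self t))⟩
  exact le_of_lt (lt_of_le_of_lt (le_min (neg_nonpos.2 (abs_nonneg t)) (neg_abs_le t)) h1)

lemma integral_abs_pow (k : ℕ) (t : ℝ) :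
    |∫ s in (0:ℝ)..t, |s| ^ k| = |t| ^ (k + 1) / (k + 1) := by
  rcases le_or_gt 0 t with ht | ht
  · have h : (∫ s in (0:ℝ)..t, |s| ^ k) = ∫ s in (0:ℝ)..t, s ^ k := by
      apply intervalIntegral.integral_congr
      intro s hs
      rw [uIcc_of_le ht] at hs
      show |s| ^ k = s ^ k
      rw [abs_of_nonneg hs.1]
    rw [h, integral_pow, zero_pow k.succ_ne_zero, sub_zero,
      abs_of_nonneg (by positivity : (0:ℝ) ≤ t ^ (k + 1) / ((k : ℝ) + 1)),
      abs_of_nonneg ht]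
  · have h : (∫ s in (0:ℝ)..t, |s| ^ k) = ∫ s in (0:ℝ)..t, (-s) ^ k := by
      apply intervalIntegral.integral_congr
      intro s hs
      rw [uIcc_of_ge (le_of_lt ht)] at hs
      show |s| ^ k = (-s) ^ k
      rw [abs_of_nonpos hs.2]
    rw [h]
    have h2 := intervalIntegral.integral_comp_neg (a := (0:ℝ)) (b := t) (fun x => x ^ k)
    rw [h2, neg_zero, integral_pow, zero_pow k.succ_ne_zero, zero_sub, neg_div,
      abs_neg, abs_of_nonneg (div_nonneg (pow_nonneg (by linarith) _) (by positivity) :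
        (0:ℝ) ≤ (-t) ^ (k + 1) / ((k : ℝ) + 1)),
      abs_of_nonpos (le_of_lt ht)]

lemma picard_diff_bound (A : ℝ → 𝔸) (hA : Continuous A) (T M : ℝ) (hM0 : 0 ≤ M)
    (hM : ∀ s, |s| ≤ T → ‖A s‖ ≤ M) :
    ∀ n, ∀ t, |t| ≤ T →
      ‖picard A (n + 1) t - picard A n t‖
        ≤ M ^ (n + 1) * |t| ^ (n + 1) / (Nat.factorial (n + 1)) := by
  intro n
  induction n with
  | zero =>
    intro t ht
    have h : picard A 1 t - picard A 0 t = ∫ s in (0:ℝ)..t, A s := by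
      simp [picard]
    rw [h]
    have := intervalIntegral.norm_integral_le_of_norm_le_const
      (C := M) (f := A) (a := (0:ℝ)) (b := t)
      (fun x hx => hM x (le_trans (abs_le_of_mem_uIoc hx) ht))
    simpa [Nat.factorial] using this
  | succ n ih =>
    intro t ht
    have hint1 : IntervalIntegrable (fun s => A s * picard A (n + 1) s) volume 0 t :=
      (hA.mul (picard_continuous A hA (n + 1))).intervalIntegrable 0 t
    have hint2 : IntervalIntegrable (fun s => A s * picard A n s) volume 0 t :=
      (hA.mul (picard_continuous A hA n)).intervalIntegrable 0 t
    have key : picard A (n + 2) t - picard A (n + 1) t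
        = ∫ s in (0:ℝ)..t, A s * (picard A (n + 1) s - picard A n s) := by
      show (1 + ∫ s in (0:ℝ)..t, A s * picard A (n + 1) s)
          - (1 + ∫ s in (0:ℝ)..t, A s * picard A n s) = _
      rw [add_sub_add_left_eq_sub, ← intervalIntegral.integral_sub hint1 hint2]
      simp [mul_sub]
    rw [key]
    set c : ℝ := M ^ (n + 2) / (Nat.factorial (n + 1)) with hc
    have hc0 : 0 ≤ c := by positivity
    have hbd : ∀ᵐ s ∂(volume.restrict (Set.uIoc (0:ℝ) t)),
        ‖A s * (picard A (n + 1) s - picard A n s)‖ ≤ c * |s| ^ (n + 1) := by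
      apply ae_restrict_of_forall_mem measurableSet_uIoc
      intro s hs
      have hsT : |s| ≤ T := le_trans (abs_le_of_mem_uIoc hs) ht
      calc ‖A s * (picard A (n + 1) s - picard A n s)‖
          ≤ ‖A s‖ * ‖picard A (n + 1) s - picard A n s‖ := norm_mul_le _ _
        _ ≤ M * (M ^ (n + 1) * |s| ^ (n + 1) / (Nat.factorial (n + 1))) := by
            apply mul_le_mul (hM s hsT) (ih s hsT) (norm_nonneg _) hM0
        _ = c * |s| ^ (n + 1) := by rw [hc]; ring
    have hgi : IntervalIntegrable (fun s => c * |s| ^ (n + 1)) volume 0 t :=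
      (continuous_const.mul ((continuous_abs).pow (n + 1))).intervalIntegrable 0 t
    have h1 := intervalIntegral.norm_integral_le_abs_of_norm_le hbd hgi
    have h2 : |∫ s in (0:ℝ)..t, c * |s| ^ (n + 1)| = c * (|t| ^ (n + 2) / (n + 2)) := by
      rw [intervalIntegral.integral_const_mul, abs_mul, abs_of_nonneg hc0,
        integral_abs_pow]
      push_cast
      ring_nf
    rw [h2] at h1
    refine le_trans h1 (le_of_eq ?_)
    rw [hc, div_mul_div_comm]
    congr 1
    rw [show Nat.factorial (n + 2) = (n + 2) * Nat.factorial (n + 1) from rfl]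
    push_cast
    ring

theorem exists_flow (A : ℝ → 𝔸) (hA : Continuous A) :
    ∃ Φ : ℝ → 𝔸, Φ 0 = 1 ∧ Continuous Φ ∧ ∀ t, HasDerivAt Φ (A t * Φ t) t := by
  -- bounds on compact intervals
  have hMex : ∀ T : ℝ, ∃ M : ℝ, 0 ≤ M ∧ ∀ s, |s| ≤ T → ‖A s‖ ≤ M := by
    intro T
    obtain ⟨C, hC⟩ := (isCompact_Icc (a := -T) (b := T)).exists_bound_of_continuousOn
      hA.continuousOn
    refine ⟨max C 0, le_max_right _ _, fun s hs => ?_⟩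
    have := hC s (by rcases abs_le.1 hs with ⟨h1, h2⟩; exact ⟨h1, h2⟩)
    exact this.trans (le_max_left _ _)
  choose M hM0 hMb using hMex
  set g : ℕ → ℝ → 𝔸 := fun n t => picard A (n + 1) t - picard A n t with hgdef
  set u : ℝ → ℕ → ℝ := fun T n => M T ^ (n + 1) * T ^ (n + 1) / (Nat.factorial (n + 1))
    with hudef
  have hu0 : ∀ T n, 0 ≤ T → 0 ≤ u T n := by
    intro T n hT
    have := hM0 T
    positivity
  have hgu : ∀ T n t, |t| ≤ T → ‖g n t‖ ≤ u T n := by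
    intro T n t ht
    have hT0 : 0 ≤ T := le_trans (abs_nonneg t) ht
    refine le_trans (picard_diff_bound A hA T (M T) (hM0 T) (hMb T) n t ht) ?_
    apply div_le_div_of_nonneg_right ?_ (by positivity)
    · exact mul_le_mul_of_nonneg_left (pow_le_pow_left₀ (abs_nonneg t) ht _)
        (pow_nonneg (hM0 T) _)
  have hu : ∀ T : ℝ, Summable (u T) := by
    intro T
    have h := (Real.summable_pow_div_factorial (M T * T))
    have h2 : Summable (fun n => (M T * T) ^ (n + 1) / (Nat.factorial (n + 1))) :=
      (summable_nat_add_iff 1).2 h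
    apply h2.congr
    intro n
    rw [mul_pow]
  have hsum : ∀ t, Summable fun n => g n t := by
    intro t
    exact Summable.of_norm_bounded (hu _) (fun n => hgu _ n t le_rfl)
  set Φ : ℝ → 𝔸 := fun t => 1 + ∑' n, g n t with hΦdef
  have hpart : ∀ n t, picard A n t = 1 + ∑ k ∈ Finset.range n, g k t := by
    intro n t
    rw [hgdef]
    rw [Finset.sum_range_sub (f := fun k => picard A k t)]
    simp [picard]
  have htendΦ : ∀ t, Tendsto (fun n => picard A n t) atTop (𝓝 (Φ t)) := by
    intro t
    have h := (hsum t).hasSum.tendsto_sum_nat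
    have h2 := h.const_add (1 : 𝔸)
    exact h2.congr fun n => (hpart n t).symm
  have huniform : ∀ T : ℝ, TendstoUniformlyOn (fun n t => picard A n t) Φ atTop
      (Icc (-T) T) := by
    intro T
    rcases lt_or_ge T 0 with hT | hT
    · rw [Set.Icc_eq_empty (by linarith)]
      exact tendstoUniformlyOn_empty
    · have h := tendstoUniformlyOn_tsum_nat (hu T)
        (f := g) (s := Icc (-T) T)
        (fun n x hx => hgu T n x (abs_le.2 ⟨hx.1, hx.2⟩))
      rw [Metric.tendstoUniformlyOn_iff] at h ⊢
      intro ε hε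
      filter_upwards [h ε hε] with n hn x hx
      have := hn x hx
      rw [hpart n x, hΦdef]
      simpa [dist_eq_norm] using this
  have hΦc : Continuous Φ := by
    rw [continuous_iff_continuousAt]
    intro t
    have hU := huniform (|t| + 1)
    have hco : ContinuousOn Φ (Icc (-(|t| + 1)) (|t| + 1)) :=
      hU.continuousOn (Frequently.of_forall fun n =>
        (picard_continuous A hA n).continuousOn)
    apply hco.continuousAt
    apply Icc_mem_nhds
    · have := neg_abs_le t; linarith
    · have := le_abs_self t; linarith
  have hbound_all : ∀ T n t, |t| ≤ T →
      ‖picard A n t‖ ≤ ‖(1:𝔸)‖ + ∑' k, u T k := by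
    intro T n t ht
    have hT0 : 0 ≤ T := le_trans (abs_nonneg t) ht
    rw [hpart]
    refine le_trans (norm_add_le _ _) (add_le_add_right ?_ _)
    refine le_trans (norm_sum_le _ _) ?_
    refine le_trans (Finset.sum_le_sum (fun k _ => hgu T k t ht)) ?_
    exact (hu T).sum_le_tsum (Finset.range n) (fun k _ => hu0 T k hT0)
  have hinteq : ∀ t, Φ t = 1 + ∫ s in (0:ℝ)..t, A s * Φ s := by
    intro t
    have h1 : Tendsto (fun n => picard A (n + 1) t) atTop (𝓝 (Φ t)) :=
      (htendΦ t).comp (tendsto_add_atTop_nat 1)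
    have h2 : Tendsto (fun n => ∫ s in (0:ℝ)..t, A s * picard A n s) atTop
        (𝓝 (∫ s in (0:ℝ)..t, A s * Φ s)) := by
      apply _root_.intervalIntegral.tendsto_integral_filter_of_dominated_convergence
        (bound := fun _ => M |t| * (‖(1:𝔸)‖ + ∑' k, u (|t|) k))
      · exact Eventually.of_forall fun n =>
          ((hA.mul (picard_continuous A hA n))).aestronglyMeasurable
      · refine Eventually.of_forall fun n => ae_of_all _ fun s hs => ?_
        have habs : |s| ≤ |t| := abs_le_of_mem_uIoc hs
        calc ‖A s * picard A n s‖ ≤ ‖A s‖ * ‖picard A n s‖ := norm_mul_le _ _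
          _ ≤ M |t| * (‖(1:𝔸)‖ + ∑' k, u (|t|) k) := by
              apply mul_le_mul (hMb _ s habs) (hbound_all _ n s habs)
                (norm_nonneg _) (hM0 _)
      · exact intervalIntegrable_const
      · exact ae_of_all _ fun s _ => (htendΦ s).const_mul (A s)
    have h2' : Tendsto (fun n => picard A (n + 1) t) atTop
        (𝓝 (1 + ∫ s in (0:ℝ)..t, A s * Φ s)) := by
      have := h2.const_add (1 : 𝔸)
      exact this.congr fun n => rfl
    exact tendsto_nhds_unique h1 h2'
  refine ⟨Φ, ?_, hΦc, ?_⟩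
  · rw [hinteq 0]
    simp
  · intro t
    have hc : Continuous fun s => A s * Φ s := hA.mul hΦc
    have hd : HasDerivAt (fun u => ∫ s in (0:ℝ)..u, A s * Φ s) (A t * Φ t) t :=
      integral_hasDerivAt_right (hc.intervalIntegrable 0 t)
        (hc.stronglyMeasurableAtFilter _ _) hc.continuousAt
    have hd2 := hd.const_add (1 : 𝔸)
    exact hd2.congr_of_eventuallyEq (Eventually.of_forall fun s => hinteq s)

theorem exists_flow_right (A : ℝ → 𝔸) (hA : Continuous A) :
    ∃ κ : ℝ → 𝔸, κ 0 = 1 ∧ Continuous κ ∧ ∀ t, HasDerivAt κ (κ t * A t) t := by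
  obtain ⟨K, hK0, hKc, hKd⟩ := exists_flow (𝔸 := 𝔸ᵐᵒᵖ)
    (fun t => MulOpposite.op (A t)) (MulOpposite.continuous_op.comp hA)
  refine ⟨fun t => (K t).unop, by simp [hK0], MulOpposite.continuous_unop.comp hKc,
    fun t => ?_⟩
  set e : 𝔸ᵐᵒᵖ ≃L[ℝ] 𝔸 := (MulOpposite.opContinuousLinearEquiv (R := ℝ) (M := 𝔸)).symm
    with he
  have h := (e.toContinuousLinearMap.hasFDerivAt (x := K t)).comp_hasDerivAt t (hKd t)
  have h2 : HasDerivAt (fun s => (K s).unop)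
      (MulOpposite.unop (MulOpposite.op (A t) * K t)) t := by
    exact h
  simpa using h2

lemma eq_zero_of_deriv_comm_nonneg (P D : ℝ → 𝔸) (hPc : Continuous P)
    (hD : ∀ t, HasDerivAt D (D t * P t - P t * D t) t) (h0 : D 0 = 0) :
    ∀ t, 0 ≤ t → D t = 0 := by
  intro t ht
  obtain ⟨C, hC⟩ := (isCompact_Icc (a := (0:ℝ)) (b := t)).exists_bound_of_continuousOn
    hPc.continuousOn
  have hcont : ContinuousOn D (Icc 0 t) := fun x _ =>
    (hD x).differentiableAt.continuousAt.continuousWithinAt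
  have hres := norm_le_gronwallBound_of_norm_deriv_right_le
    (f := D) (f' := fun x => D x * P x - P x * D x) (δ := 0) (K := 2 * C) (ε := 0)
    hcont (fun x _ => (hD x).hasDerivWithinAt) (by simp [h0]) ?_ t ⟨ht, le_refl t⟩
  · rw [gronwallBound_ε0_δ0] at hres
    exact norm_le_zero_iff.1 hres
  · intro x hx
    have hCx : ‖P x‖ ≤ C := hC x ⟨hx.1, le_of_lt hx.2⟩
    have h1 : ‖D x * P x‖ ≤ ‖D x‖ * C :=
      le_trans (norm_mul_le _ _) (mul_le_mul_of_nonneg_left hCx (norm_nonneg _))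
    have h2 : ‖P x * D x‖ ≤ C * ‖D x‖ :=
      le_trans (norm_mul_le _ _) (mul_le_mul_of_nonneg_right hCx (norm_nonneg _))
    calc ‖D x * P x - P x * D x‖ ≤ ‖D x * P x‖ + ‖P x * D x‖ := norm_sub_le _ _
      _ ≤ 2 * C * ‖D x‖ + 0 := by linarith
lemma eq_zero_of_deriv_comm (P D : ℝ → 𝔸) (hPc : Continuous P)
    (hD : ∀ t, HasDerivAt D (D t * P t - P t * D t) t) (h0 : D 0 = 0) :
    ∀ t, D t = 0 := by
  intro t
  rcases le_or_gt 0 t with ht | ht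
  · exact eq_zero_of_deriv_comm_nonneg P D hPc hD h0 t ht
  · set P2 : ℝ → 𝔸 := fun s => -P (-s) with hP2
    set D2 : ℝ → 𝔸 := fun s => D (-s) with hD2
    have hP2c : Continuous P2 := (hPc.comp continuous_neg).neg
    have hD2d : ∀ s, HasDerivAt D2 (D2 s * P2 s - P2 s * D2 s) s := by
      intro s
      have h := (hD (-s)).scomp s (hasDerivAt_neg s)
      have : HasDerivAt D2 (-(D (-s) * P (-s) - P (-s) * D (-s))) s := by
        refine h.congr_deriv ?_
        rw [neg_one_smul]
      refine this.congr_deriv ?_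
      simp only [hP2, hD2]
      noncomm_ring
    have := eq_zero_of_deriv_comm_nonneg P2 D2 hP2c hD2d (by simp [hD2, h0]) (-t)
      (by linarith)
    simpa [hD2] using this

lemma flow_inverse (P Φ κ : ℝ → 𝔸) (hPc : Continuous P)
    (hΦd : ∀ t, HasDerivAt Φ (-(P t * Φ t)) t)
    (hκd : ∀ t, HasDerivAt κ (κ t * P t) t)
    (hΦ0 : Φ 0 = 1) (hκ0 : κ 0 = 1) :
    (∀ t, κ t * Φ t = 1) ∧ (∀ t, Φ t * κ t = 1) := by
  constructor
  · have hd : ∀ t, HasDerivAt (fun t => κ t * Φ t) 0 t := by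
      intro t
      have h := (hκd t).mul (hΦd t)
      refine h.congr_deriv ?_
      noncomm_ring
    intro t
    have h := is_const_of_deriv_eq_zero (f := fun t => κ t * Φ t)
      (fun x => (hd x).differentiableAt) (fun x => (hd x).deriv) t 0
    simpa [hκ0, hΦ0] using h
  · have hDd : ∀ t, HasDerivAt (fun t => Φ t * κ t - 1)
        ((Φ t * κ t - 1) * P t - P t * (Φ t * κ t - 1)) t := by
      intro t
      have h := ((hΦd t).mul (hκd t)).sub_const (1 : 𝔸)
      refine h.congr_deriv ?_
      noncomm_ring
    have hz := eq_zero_of_deriv_comm P (fun t => Φ t * κ t - 1) hPc hDd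
      (by simp [hΦ0, hκ0])
    intro t
    have := hz t
    exact sub_eq_zero.1 this

lemma conj_const (P Pt F F' Φ Ψ κΦ κΨ : ℝ → 𝔸)
    (hF : ∀ t, HasDerivAt F (F' t) t)
    (hF' : ∀ t, F' t = F t * P t - Pt t * F t)
    (hΦd : ∀ t, HasDerivAt Φ (-(P t * Φ t)) t)
    (hκΨd : ∀ t, HasDerivAt κΨ (κΨ t * Pt t) t)
    (hΦ0 : Φ 0 = 1) (hκΨ0 : κΨ 0 = 1)
    (hΨκ : ∀ t, Ψ t * κΨ t = 1) (hΦκ : ∀ t, Φ t * κΦ t = 1) :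
    ∀ t, F t = Ψ t * F 0 * κΦ t := by
  have hd : ∀ t, HasDerivAt (fun t => κΨ t * F t * Φ t) 0 t := by
    intro t
    have h := ((hκΨd t).mul (hF t)).mul (hΦd t)
    refine h.congr_deriv ?_
    rw [hF' t, Pi.mul_apply]
    noncomm_ring
  have hconst : ∀ t, κΨ t * F t * Φ t = F 0 := by
    intro t
    have h := is_const_of_deriv_eq_zero (f := fun t => κΨ t * F t * Φ t)
      (fun x => (hd x).differentiableAt) (fun x => (hd x).deriv) t 0
    simpa [hκΨ0, hΦ0] using h
  intro t
  calc F t = (Ψ t * κΨ t) * F t * (Φ t * κΦ t) := by rw [hΨκ, hΦκ]; simp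
    _ = Ψ t * (κΨ t * F t * Φ t) * κΦ t := by noncomm_ring
    _ = Ψ t * F 0 * κΦ t := by rw [hconst]

end FactorizedFlowAux

/-- Full statement of Proposition 2 / Proposition 5: if `F' = F·P − Pt·F` and
`Q' = Q·P − Pt·Q` with `P, Pt` continuous, then there exist differentiable
unit-valued curves `Φ, Ψ` with `Φ(0) = Ψ(0) = 1`, solving `Φ' = −P·Φ` and
`Ψ' = −Pt·Ψ`, such that `F(t) = Ψ(t)·F(0)·Φ(t)⁻¹` and
`Q(t) = Ψ(t)·Q(0)·Φ(t)⁻¹` for all `t`. -/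
theorem factorized_flow_dressing_representation
    {𝔸 : Type*} [NormedRing 𝔸] [NormedAlgebra ℝ 𝔸] [CompleteSpace 𝔸]
    (P Pt F Q : ℝ → 𝔸) (F' Q' : ℝ → 𝔸)
    (hPc : Continuous P) (hPtc : Continuous Pt)
    (hF : ∀ t : ℝ, HasDerivAt F (F' t) t)
    (hQ : ∀ t : ℝ, HasDerivAt Q (Q' t) t)
    (hF' : ∀ t : ℝ, F' t = F t * P t - Pt t * F t)
    (hQ' : ∀ t : ℝ, Q' t = Q t * P t - Pt t * Q t) :
    ∃ Φ Ψ : ℝ → 𝔸,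
      Φ 0 = 1 ∧ Ψ 0 = 1 ∧
      (∀ t : ℝ, IsUnit (Φ t)) ∧ (∀ t : ℝ, IsUnit (Ψ t)) ∧
      (∀ t : ℝ, HasDerivAt Φ (-(P t * Φ t)) t) ∧
      (∀ t : ℝ, HasDerivAt Ψ (-(Pt t * Ψ t)) t) ∧
      (∀ t : ℝ, F t = Ψ t * F 0 * Ring.inverse (Φ t)) ∧
      (∀ t : ℝ, Q t = Ψ t * Q 0 * Ring.inverse (Φ t)) := by
  classical
  obtain ⟨Φ, hΦ0, hΦc, hΦd0⟩ := FactorizedFlowAux.exists_flow (fun t => -P t) hPc.neg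
  obtain ⟨Ψ, hΨ0, hΨc, hΨd0⟩ := FactorizedFlowAux.exists_flow (fun t => -Pt t) hPtc.neg
  have hΦd : ∀ t, HasDerivAt Φ (-(P t * Φ t)) t := fun t => by
    simpa [neg_mul] using hΦd0 t
  have hΨd : ∀ t, HasDerivAt Ψ (-(Pt t * Ψ t)) t := fun t => by
    simpa [neg_mul] using hΨd0 t
  obtain ⟨κΦ, hκΦ0, hκΦc, hκΦd⟩ := FactorizedFlowAux.exists_flow_right P hPc
  obtain ⟨κΨ, hκΨ0, hκΨc, hκΨd⟩ := FactorizedFlowAux.exists_flow_right Pt hPtc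
  obtain ⟨hκΦΦ, hΦκΦ⟩ := FactorizedFlowAux.flow_inverse P Φ κΦ hPc hΦd hκΦd hΦ0 hκΦ0
  obtain ⟨hκΨΨ, hΨκΨ⟩ := FactorizedFlowAux.flow_inverse Pt Ψ κΨ hPtc hΨd hκΨd hΨ0 hκΨ0
  have hinv : ∀ t, Ring.inverse (Φ t) = κΦ t := by
    intro t
    exact Ring.inverse_unit ⟨Φ t, κΦ t, hΦκΦ t, hκΦΦ t⟩
  have hFrep := FactorizedFlowAux.conj_const P Pt F F' Φ Ψ κΦ κΨ hF hF' hΦd hκΨd hΦ0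
    hκΨ0 hΨκΨ hΦκΦ
  have hQrep := FactorizedFlowAux.conj_const P Pt Q Q' Φ Ψ κΦ κΨ hQ hQ' hΦd hκΨd hΦ0
    hκΨ0 hΨκΨ hΦκΦ
  refine ⟨Φ, Ψ, hΦ0, hΨ0, ?_, ?_, hΦd, hΨd, ?_, ?_⟩
  · exact fun t => ⟨⟨Φ t, κΦ t, hΦκΦ t, hκΦΦ t⟩, rfl⟩
  · exact fun t => ⟨⟨Ψ t, κΨ t, hΨκΨ t, hκΨΨ t⟩, rfl⟩
  · intro t; rw [hinv t]; exact hFrep t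
  · intro t; rw [hinv t]; exact hQrep t
end

section
/- Left-factor part of the centrally extended factorization theorem (Theorem 3 of the paper), derivation form: Let 𝔸 be a unital normed algebra and D : 𝔸 → 𝔸 a continuous derivation (a linear map with D(a·b) = D(a)·b + a·D(b)). Let F, Q, P, P̃ : ℝ → 𝔸 be curves with F, Q differentiable and F(t) invertible for every t, satisfying the centrally extended factorized evolution equations F'(t) = F(t)·P(t) − P̃(t)·F(t) and Q'(t) = Q(t)·P(t) − P̃(t)·Q(t) − F(t)·D(P(t)) for all t ∈ ℝ. Then the curve l(t) := F(t)⁻¹·Q(t) is differentiable and satisfies the centrally extended Lax flow l'(t) = l(t)·P(t) − P(t)·l(t) − D(P(t)) for all t ∈ ℝ (the abstract form of dl/dt = [l − d/dy, ∇γ(l)₊]). -/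
open Filter Topology

private lemma inv_curve_hasDerivAt
    {𝔸 : Type*} [NormedRing 𝔸] [NormedAlgebra ℝ 𝔸]
    {F F' : ℝ → 𝔸}
    (hF : ∀ t : ℝ, HasDerivAt F (F' t) t)
    (hFu : ∀ t : ℝ, IsUnit (F t)) (t : ℝ) :
    HasDerivAt (fun s : ℝ => Ring.inverse (F s))
      (-(Ring.inverse (F t) * F' t * Ring.inverse (F t))) t := by
  set g : ℝ → 𝔸 := fun s => Ring.inverse (F s) with hg
  have h1 : ∀ s, g s * F s = 1 := fun s => Ring.inverse_mul_cancel _ (hFu s)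
  have h2 : ∀ s, F s * g s = 1 := fun s => Ring.mul_inverse_cancel _ (hFu s)
  have key : ∀ s, g s - g t = g t * (F t - F s) * g s := by
    intro s
    have : g t * (F t - F s) * g s
        = g t * F t * g s - g t * (F s * g s) := by noncomm_ring
    rw [this, h1, h2, one_mul, mul_one]
  -- continuity of g at t
  have hFc : Tendsto F (𝓝 t) (𝓝 (F t)) := (hF t).continuousAt
  have hFz : Tendsto (fun s => ‖F s - F t‖) (𝓝 t) (𝓝 0) := by
    rw [← tendsto_iff_norm_sub_tendsto_zero]; exact hFc
  have hδ : (0:ℝ) < (2 * (‖g t‖ + 1))⁻¹ := by positivity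
  have hev : ∀ᶠ s in 𝓝 t, ‖F s - F t‖ < (2 * (‖g t‖ + 1))⁻¹ :=
    hFz.eventually (eventually_lt_nhds hδ)
  have hbound : ∀ᶠ s in 𝓝 t, ‖g s - g t‖ ≤ 2 * ‖g t‖ ^ 2 * ‖F s - F t‖ := by
    filter_upwards [hev] with s hs
    have hsmall : ‖g t‖ * ‖F t - F s‖ ≤ 1 / 2 := by
      rw [norm_sub_rev] at hs
      have h0 : (0:ℝ) ≤ ‖g t‖ := norm_nonneg _
      have : ‖g t‖ * ‖F t - F s‖ ≤ (‖g t‖ + 1) * (2 * (‖g t‖ + 1))⁻¹ := by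
        apply mul_le_mul (by linarith) hs.le (norm_nonneg _) (by linarith)
      rw [mul_inv, ← mul_assoc] at this
      calc ‖g t‖ * ‖F t - F s‖ ≤ (‖g t‖ + 1) * (‖g t‖ + 1)⁻¹ * 2⁻¹ := by
            linarith [this]
        _ = 1 / 2 := by rw [mul_inv_cancel₀ (by positivity)]; norm_num
    have hgs : ‖g s‖ ≤ 2 * ‖g t‖ := by
      have e1 : ‖g s - g t‖ ≤ ‖g t‖ * ‖F t - F s‖ * ‖g s‖ := by
        rw [key s]
        exact (norm_mul_le _ _).trans
          (mul_le_mul_of_nonneg_right (norm_mul_le _ _) (norm_nonneg _))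
      have e2 : ‖g s‖ ≤ ‖g t‖ + ‖g s - g t‖ := by
        have := norm_sub_norm_le (g s) (g t)
        linarith [this]
      have e3 : ‖g t‖ * ‖F t - F s‖ * ‖g s‖ ≤ (1/2) * ‖g s‖ :=
        mul_le_mul_of_nonneg_right hsmall (norm_nonneg _)
      linarith
    calc ‖g s - g t‖ ≤ ‖g t‖ * ‖F t - F s‖ * ‖g s‖ := by
          rw [key s]
          exact (norm_mul_le _ _).trans
            (mul_le_mul_of_nonneg_right (norm_mul_le _ _) (norm_nonneg _))
      _ ≤ ‖g t‖ * ‖F t - F s‖ * (2 * ‖g t‖) := by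
          apply mul_le_mul_of_nonneg_left hgs; positivity
      _ = 2 * ‖g t‖ ^ 2 * ‖F s - F t‖ := by rw [norm_sub_rev (F t)]; ring
  have hgz : Tendsto (fun s => g s - g t) (𝓝 t) (𝓝 0) := by
    apply squeeze_zero_norm' hbound
    have := hFz.const_mul (2 * ‖g t‖ ^ 2)
    simpa using this
  have hgc : Tendsto g (𝓝 t) (𝓝 (g t)) := by
    have := hgz.add_const (g t)
    simpa using this
  -- derivative via slope
  rw [hasDerivAt_iff_tendsto_slope]
  have hslopeF : Tendsto (slope F t) (𝓝[≠] t) (𝓝 (F' t)) :=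
    hasDerivAt_iff_tendsto_slope.mp (hF t)
  have heq : slope g t =ᶠ[𝓝[≠] t] fun s => g t * (-(slope F t s)) * g s := by
    filter_upwards [self_mem_nhdsWithin] with s (hs : s ≠ t)
    rw [slope_def_module, slope_def_module, key s, smul_sub, ← smul_mul_assoc,
      ← mul_smul_comm, smul_sub, neg_sub]
  apply Tendsto.congr' heq.symm
  have : Tendsto (fun s => g t * (-(slope F t s)) * g s) (𝓝[≠] t)
      (𝓝 (g t * (-(F' t)) * g t)) :=
    ((tendsto_const_nhds.mul hslopeF.neg).mul (hgc.mono_left nhdsWithin_le_nhds))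
  simpa [mul_assoc] using this

/-- Left-factor part of the centrally extended factorization theorem
(Theorem 3), derivation form: if `D` is a continuous derivation of `𝔸`,
`F' = F·P − Pt·F` and `Q' = Q·P − Pt·Q − F·D(P)` with `F` unit-valued, then
`l := F⁻¹·Q` satisfies the centrally extended Lax flow
`l' = l·P − P·l − D(P)`. -/
theorem centrally_extended_factorization_left
    {𝔸 : Type*} [NormedRing 𝔸] [NormedAlgebra ℝ 𝔸]
    (D : 𝔸 →L[ℝ] 𝔸) (hD : ∀ a b : 𝔸, D (a * b) = D a * b + a * D b)
    (F Q P Pt F' Q' : ℝ → 𝔸)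
    (hF : ∀ t : ℝ, HasDerivAt F (F' t) t)
    (hQ : ∀ t : ℝ, HasDerivAt Q (Q' t) t)
    (hFu : ∀ t : ℝ, IsUnit (F t))
    (hF' : ∀ t : ℝ, F' t = F t * P t - Pt t * F t)
    (hQ' : ∀ t : ℝ, Q' t = Q t * P t - Pt t * Q t - F t * D (P t)) :
    ∀ t : ℝ, HasDerivAt (fun s : ℝ => Ring.inverse (F s) * Q s)
      ((Ring.inverse (F t) * Q t) * P t - P t * (Ring.inverse (F t) * Q t)
        - D (P t)) t := by
  intro t
  have hu := hFu t
  have hinv := inv_curve_hasDerivAt hF hFu t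
  have h := hinv.mul (hQ t)
  convert h using 1
  · rfl
  have h1 : Ring.inverse (F t) * F t = 1 := Ring.inverse_mul_cancel _ hu
  have h2 : F t * Ring.inverse (F t) = 1 := Ring.mul_inverse_cancel _ hu
  rw [hF' t, hQ' t]
  set i := Ring.inverse (F t)
  have e : i * (F t * P t - Pt t * F t) * i = P t * i - i * Pt t := by
    rw [mul_sub, sub_mul, ← mul_assoc, ← mul_assoc, h1, one_mul,
      mul_assoc (i * Pt t), mul_assoc, h2, mul_one]
  rw [e]
  noncomm_ring
  rw [← mul_assoc i (F t), h1, one_mul]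
end

section
/- Representation formula (d6.24) of the paper: Let 𝔸 be a unital normed algebra, d ∈ 𝔸 a fixed element, P, P̃ : ℝ → 𝔸 curves, and let F, Q : ℝ → 𝔸 be differentiable with F'(t) = F(t)·P(t) − P̃(t)·F(t) and Q'(t) = Q(t)·P(t) − P̃(t)·Q(t) − F(t)·(d·P(t) − P(t)·d) for all t. Let Φ, Ψ : ℝ → 𝔸 be differentiable unit-valued curves with Φ'(t) = −P(t)·Φ(t) and Ψ'(t) = −P̃(t)·Ψ(t) for all t. Then the curves t ↦ Ψ(t)⁻¹·F(t)·Φ(t) and t ↦ Ψ(t)⁻¹·(Q(t) − F(t)·d)·Φ(t) are constant; equivalently, F(t) = Ψ(t)·F̄·Φ(t)⁻¹ and Q(t) − F(t)·d = Ψ(t)·(Q̄ − F̄·d)·Φ(t)⁻¹ for all t, where F̄ := Ψ(0)⁻¹·F(0)·Φ(0) and Q̄ − F̄·d := Ψ(0)⁻¹·(Q(0) − F(0)·d)·Φ(0) are constant with respect to t. -/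
open Filter Topology

/-- If `Ψ` is unit-valued everywhere and differentiable at `t`, then
`s ↦ Ring.inverse (Ψ s)` is differentiable at `t` with the usual formula. -/
lemma inverse_comp_hasDerivAt {𝔸 : Type*} [NormedRing 𝔸] [NormedAlgebra ℝ 𝔸]
    {Ψ : ℝ → 𝔸} {Ψ' : 𝔸} {t : ℝ} (hu : ∀ s, IsUnit (Ψ s))
    (h : HasDerivAt Ψ Ψ' t) :
    HasDerivAt (fun s => Ring.inverse (Ψ s))
      (-(Ring.inverse (Ψ t) * Ψ' * Ring.inverse (Ψ t))) t := by
  set V : ℝ → 𝔸 := fun s => Ring.inverse (Ψ s) with hVdef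
  have key : ∀ s, V s - V t = V s * (Ψ t - Ψ s) * V t := by
    intro s
    have h1 : Ψ t * V t = 1 := Ring.mul_inverse_cancel _ (hu t)
    have h2 : V s * Ψ s = 1 := Ring.inverse_mul_cancel _ (hu s)
    calc V s - V t = V s * (Ψ t * V t) - (V s * Ψ s) * V t := by
          rw [h1, h2]; simp
      _ = V s * (Ψ t - Ψ s) * V t := by noncomm_ring
  have hVcont : Tendsto V (𝓝 t) (𝓝 (V t)) := by
    have hΨc : Tendsto Ψ (𝓝 t) (𝓝 (Ψ t)) := h.continuousAt
    have hd : Tendsto (fun s => Ψ s - Ψ t) (𝓝 t) (𝓝 0) := by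
      have : Tendsto (fun s => Ψ s - Ψ t) (𝓝 t) (𝓝 (Ψ t - Ψ t)) :=
        hΨc.sub tendsto_const_nhds
      simpa using this
    have h0 : Tendsto (fun s => ‖Ψ s - Ψ t‖ * ‖V t‖) (𝓝 t) (𝓝 0) := by
      have := hd.norm.mul_const ‖V t‖
      simpa using this
    have hsmall : ∀ᶠ s in 𝓝 t, ‖Ψ s - Ψ t‖ * ‖V t‖ ≤ 1/2 :=
      h0.eventually (eventually_le_nhds (by norm_num))
    have hbound : ∀ᶠ s in 𝓝 t, ‖V s - V t‖ ≤ 2 * ‖V t‖^2 * ‖Ψ s - Ψ t‖ := by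
      filter_upwards [hsmall] with s hs
      have h3 : ‖V s - V t‖ ≤ ‖V s‖ * ‖Ψ s - Ψ t‖ * ‖V t‖ := by
        rw [key s]
        calc ‖V s * (Ψ t - Ψ s) * V t‖ ≤ ‖V s * (Ψ t - Ψ s)‖ * ‖V t‖ :=
              norm_mul_le _ _
          _ ≤ ‖V s‖ * ‖Ψ t - Ψ s‖ * ‖V t‖ := by
              gcongr; exact norm_mul_le _ _
          _ = ‖V s‖ * ‖Ψ s - Ψ t‖ * ‖V t‖ := by rw [norm_sub_rev]
      have h4 : ‖V s‖ ≤ ‖V s - V t‖ + ‖V t‖ := by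
        simpa using norm_add_le (V s - V t) (V t)
      nlinarith [norm_nonneg (V s - V t), norm_nonneg (V t),
        norm_nonneg (Ψ s - Ψ t), norm_nonneg (V s),
        mul_le_mul_of_nonneg_right h4
          (mul_nonneg (norm_nonneg (Ψ s - Ψ t)) (norm_nonneg (V t))),
        mul_le_mul_of_nonneg_left hs (norm_nonneg (V s - V t))]
    have hlim : Tendsto (fun s => 2 * ‖V t‖^2 * ‖Ψ s - Ψ t‖) (𝓝 t) (𝓝 0) := by
      have := hd.norm.const_mul (2 * ‖V t‖^2)
      simpa using this
    have hz : Tendsto (fun s => V s - V t) (𝓝 t) (𝓝 0) :=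
      squeeze_zero_norm' hbound hlim
    have := hz.add_const (V t)
    simpa using this
  rw [hasDerivAt_iff_tendsto_slope] at h ⊢
  have heq : ∀ s, slope V t s = -(V s * slope Ψ t s * V t) := by
    intro s
    rw [slope_def_module, slope_def_module, key s, mul_smul_comm,
      smul_mul_assoc, ← smul_neg]
    congr 1
    noncomm_ring
  have hlim2 : Tendsto (fun s => -(V s * slope Ψ t s * V t)) (𝓝[≠] t)
      (𝓝 (-(V t * Ψ' * V t))) :=
    (((hVcont.mono_left nhdsWithin_le_nhds).mul h).mul tendsto_const_nhds).neg
  exact hlim2.congr (fun s => (heq s).symm)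

/-- Key constancy lemma: if `R' = R·P − Pt·R` then `Ψ⁻¹·R·Φ` is constant. -/
lemma repr_key {𝔸 : Type*} [NormedRing 𝔸] [NormedAlgebra ℝ 𝔸]
    (P Pt R Φ Ψ : ℝ → 𝔸)
    (hR : ∀ t : ℝ, HasDerivAt R (R t * P t - Pt t * R t) t)
    (hΦu : ∀ t : ℝ, IsUnit (Φ t)) (hΨu : ∀ t : ℝ, IsUnit (Ψ t))
    (hΦ : ∀ t : ℝ, HasDerivAt Φ (-(P t * Φ t)) t)
    (hΨ : ∀ t : ℝ, HasDerivAt Ψ (-(Pt t * Ψ t)) t) :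
    ∀ t : ℝ, Ring.inverse (Ψ t) * R t * Φ t = Ring.inverse (Ψ 0) * R 0 * Φ 0 := by
  have hV : ∀ t : ℝ, HasDerivAt (fun s => Ring.inverse (Ψ s))
      (Ring.inverse (Ψ t) * Pt t) t := by
    intro t
    have h1 : Ψ t * Ring.inverse (Ψ t) = 1 := Ring.mul_inverse_cancel _ (hΨu t)
    have := inverse_comp_hasDerivAt hΨu (hΨ t)
    convert this using 1
    calc Ring.inverse (Ψ t) * Pt t
        = Ring.inverse (Ψ t) * Pt t * (Ψ t * Ring.inverse (Ψ t)) := by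
          rw [h1, mul_one]
      _ = -(Ring.inverse (Ψ t) * -(Pt t * Ψ t) * Ring.inverse (Ψ t)) := by
          noncomm_ring
  have hH : ∀ t : ℝ, HasDerivAt
      (fun s => Ring.inverse (Ψ s) * R s * Φ s) 0 t := by
    intro t
    have := ((hV t).mul (hR t)).mul (hΦ t)
    exact this.congr_deriv (by simp only [Pi.mul_apply]; noncomm_ring)
  intro t
  exact is_const_of_deriv_eq_zero (fun s => (hH s).differentiableAt)
    (fun s => (hH s).deriv) t 0

/-- Representation formula (d6.24): under the centrally extended factorized
evolution equations for `F, Q` and the dressing equations `Φ' = −P·Φ`,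
`Ψ' = −Pt·Ψ` for unit-valued `Φ, Ψ`, the curves `Ψ⁻¹·F·Φ` and
`Ψ⁻¹·(Q − F·d)·Φ` are constant; equivalently `F = Ψ·F̄·Φ⁻¹` and
`Q − F·d = Ψ·(Q̄ − F̄·d)·Φ⁻¹` with the constants `F̄ := Ψ(0)⁻¹·F(0)·Φ(0)` and
`Q̄ − F̄·d := Ψ(0)⁻¹·(Q(0) − F(0)·d)·Φ(0)`. -/
theorem centrally_extended_representation_formula
    {𝔸 : Type*} [NormedRing 𝔸] [NormedAlgebra ℝ 𝔸]
    (d : 𝔸) (P Pt F Q Φ Ψ : ℝ → 𝔸)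
    (hF : ∀ t : ℝ, HasDerivAt F (F t * P t - Pt t * F t) t)
    (hQ : ∀ t : ℝ, HasDerivAt Q
      (Q t * P t - Pt t * Q t - F t * (d * P t - P t * d)) t)
    (hΦu : ∀ t : ℝ, IsUnit (Φ t)) (hΨu : ∀ t : ℝ, IsUnit (Ψ t))
    (hΦ : ∀ t : ℝ, HasDerivAt Φ (-(P t * Φ t)) t)
    (hΨ : ∀ t : ℝ, HasDerivAt Ψ (-(Pt t * Ψ t)) t) :
    (∀ t : ℝ, Ring.inverse (Ψ t) * F t * Φ t
        = Ring.inverse (Ψ 0) * F 0 * Φ 0) ∧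
    (∀ t : ℝ, Ring.inverse (Ψ t) * (Q t - F t * d) * Φ t
        = Ring.inverse (Ψ 0) * (Q 0 - F 0 * d) * Φ 0) ∧
    (∀ t : ℝ, F t
        = Ψ t * (Ring.inverse (Ψ 0) * F 0 * Φ 0) * Ring.inverse (Φ t)) ∧
    (∀ t : ℝ, Q t - F t * d
        = Ψ t * (Ring.inverse (Ψ 0) * (Q 0 - F 0 * d) * Φ 0)
            * Ring.inverse (Φ t)) := by
  have h1 := repr_key P Pt F Φ Ψ hF hΦu hΨu hΦ hΨ
  have hR : ∀ t : ℝ, HasDerivAt (fun s => Q s - F s * d)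
      ((Q t - F t * d) * P t - Pt t * (Q t - F t * d)) t := by
    intro t
    have := (hQ t).sub ((hF t).mul_const d)
    exact this.congr_deriv (by noncomm_ring)
  have h2 := repr_key P Pt (fun s => Q s - F s * d) Φ Ψ hR hΦu hΨu hΦ hΨ
  refine ⟨h1, h2, ?_, ?_⟩
  · intro t
    calc F t = Ψ t * Ring.inverse (Ψ t) * F t * (Φ t * Ring.inverse (Φ t)) := by
          rw [Ring.mul_inverse_cancel _ (hΨu t), Ring.mul_inverse_cancel _ (hΦu t)]
          simp
      _ = Ψ t * (Ring.inverse (Ψ t) * F t * Φ t) * Ring.inverse (Φ t) := by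
          noncomm_ring
      _ = Ψ t * (Ring.inverse (Ψ 0) * F 0 * Φ 0) * Ring.inverse (Φ t) := by
          rw [h1 t]
  · intro t
    calc Q t - F t * d
        = Ψ t * Ring.inverse (Ψ t) * (Q t - F t * d) * (Φ t * Ring.inverse (Φ t)) := by
          rw [Ring.mul_inverse_cancel _ (hΨu t), Ring.mul_inverse_cancel _ (hΦu t)]
          simp
      _ = Ψ t * (Ring.inverse (Ψ t) * (Q t - F t * d) * Φ t) * Ring.inverse (Φ t) := by
          noncomm_ring
      _ = Ψ t * (Ring.inverse (Ψ 0) * (Q 0 - F 0 * d) * Φ 0) * Ring.inverse (Φ t) := by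
          rw [h2 t]
end

section
/- Right-factor centrally extended Lax flow (the form (d6.22b) used in Theorem 3 of the paper): Let 𝔸 be a unital normed algebra, d ∈ 𝔸 a fixed element, P, P̃ : ℝ → 𝔸 curves, and let F, Q : ℝ → 𝔸 be differentiable with F(t) invertible for all t, satisfying F'(t) = F(t)·P(t) − P̃(t)·F(t) and Q'(t) = Q(t)·P(t) − P̃(t)·Q(t) − F(t)·(d·P(t) − P(t)·d) for all t ∈ ℝ. Then the curve m(t) := (Q(t) − F(t)·d)·F(t)⁻¹ is differentiable and satisfies the Lax equation m'(t) = m(t)·P̃(t) − P̃(t)·m(t) for all t ∈ ℝ. -/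
open Filter Topology

/-- Derivative of `s ↦ Ring.inverse (F s)` when `F` is unit-valued everywhere
(no completeness needed). -/
lemma hasDerivAt_ringInverse_comp
    {𝔸 : Type*} [NormedRing 𝔸] [NormedAlgebra ℝ 𝔸]
    (F : ℝ → 𝔸) (F' : 𝔸) (t : ℝ) (hF : HasDerivAt F F' t)
    (hFu : ∀ s : ℝ, IsUnit (F s)) :
    HasDerivAt (fun s => Ring.inverse (F s))
      (-(Ring.inverse (F t) * F' * Ring.inverse (F t))) t := by
  set g : ℝ → 𝔸 := fun s => Ring.inverse (F s) with hg
  have hgl : ∀ s, g s * F s = 1 := fun s => Ring.inverse_mul_cancel _ (hFu s)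
  have hgr : ∀ s, F s * g s = 1 := fun s => Ring.mul_inverse_cancel _ (hFu s)
  have key : ∀ s, g s - g t = -(g s * (F s - F t) * g t) := by
    intro s
    have h1 : g s * (F s - F t) * g t
        = (g s * F s) * g t - g s * (F t * g t) := by noncomm_ring
    rw [h1, hgl s, hgr t, one_mul, mul_one]
    abel
  -- continuity of g at t
  have hFc : Tendsto (fun s => ‖F s - F t‖) (𝓝 t) (𝓝 0) := by
    have := (hF.continuousAt.tendsto.sub (tendsto_const_nhds (x := F t))).norm
    simpa using this
  have hb : ∀ᶠ s in 𝓝 t, ‖g s‖ ≤ 2 * ‖g t‖ := by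
    have hsmall : ∀ᶠ s in 𝓝 t, ‖F s - F t‖ * ‖g t‖ ≤ 1 / 2 := by
      have hlt : ∀ᶠ s in 𝓝 t, ‖F s - F t‖ < 1 / (2 * (‖g t‖ + 1)) := by
        refine hFc.eventually_lt_const ?_
        positivity
      filter_upwards [hlt] with s hs
      have h0 : (0:ℝ) < ‖g t‖ + 1 := by positivity
      have := mul_le_mul_of_nonneg_right hs.le (norm_nonneg (g t))
      calc ‖F s - F t‖ * ‖g t‖ ≤ 1 / (2 * (‖g t‖ + 1)) * ‖g t‖ := this
        _ ≤ 1 / 2 := by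
            rw [div_mul_eq_mul_div, div_le_div_iff₀ (by positivity) (by norm_num)]
            nlinarith [norm_nonneg (g t)]
    filter_upwards [hsmall] with s hs
    have h1 : ‖g s‖ ≤ ‖g t‖ + ‖g s‖ * (‖F s - F t‖ * ‖g t‖) := by
      have h2 : g s = g t + -(g s * (F s - F t) * g t) := by
        rw [← key s]; abel
      calc ‖g s‖ = ‖g t + -(g s * (F s - F t) * g t)‖ := by rw [← h2]
        _ ≤ ‖g t‖ + ‖-(g s * (F s - F t) * g t)‖ := norm_add_le _ _
        _ = ‖g t‖ + ‖g s * (F s - F t) * g t‖ := by rw [norm_neg]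
        _ ≤ ‖g t‖ + ‖g s‖ * (‖F s - F t‖ * ‖g t‖) := by
            gcongr
            calc ‖g s * (F s - F t) * g t‖ ≤ ‖g s * (F s - F t)‖ * ‖g t‖ :=
                  norm_mul_le _ _
              _ ≤ ‖g s‖ * ‖F s - F t‖ * ‖g t‖ := by
                  gcongr; exact norm_mul_le _ _
              _ = ‖g s‖ * (‖F s - F t‖ * ‖g t‖) := by ring
    nlinarith [norm_nonneg (g s), norm_nonneg (g t)]
  have hgc : Tendsto g (𝓝 t) (𝓝 (g t)) := by
    have hdiff : Tendsto (fun s => g s - g t) (𝓝 t) (𝓝 0) := by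
      apply squeeze_zero_norm' (f := fun s => g s - g t)
        (a := fun s => 2 * ‖g t‖ * ‖g t‖ * ‖F s - F t‖)
      · filter_upwards [hb] with s hs
        rw [key s, norm_neg]
        calc ‖g s * (F s - F t) * g t‖ ≤ ‖g s‖ * ‖F s - F t‖ * ‖g t‖ := by
              calc ‖g s * (F s - F t) * g t‖ ≤ ‖g s * (F s - F t)‖ * ‖g t‖ :=
                    norm_mul_le _ _
                _ ≤ ‖g s‖ * ‖F s - F t‖ * ‖g t‖ := by gcongr; exact norm_mul_le _ _
          _ ≤ 2 * ‖g t‖ * ‖F s - F t‖ * ‖g t‖ := by gcongr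
          _ = 2 * ‖g t‖ * ‖g t‖ * ‖F s - F t‖ := by ring
      · have := hFc.const_mul (2 * ‖g t‖ * ‖g t‖)
        simpa using this
    have := hdiff.add (tendsto_const_nhds (x := g t))
    simpa using this
  -- the slope identity
  rw [hasDerivAt_iff_tendsto_slope]
  have hslopeF : Tendsto (slope F t) (𝓝[≠] t) (𝓝 F') :=
    hasDerivAt_iff_tendsto_slope.mp hF
  have hEq : slope g t = fun s => -(g s * slope F t s * g t) := by
    funext s
    rw [slope_def_module, slope_def_module, key s]
    rw [smul_neg, mul_smul_comm, smul_mul_assoc]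
  rw [hEq]
  have := (((hgc.mono_left nhdsWithin_le_nhds).mul hslopeF).mul
    (tendsto_const_nhds (x := g t))).neg
  exact this

/-- Right-factor centrally extended Lax flow (form (d6.22b) of Theorem 3):
if `F' = F·P − Pt·F` and `Q' = Q·P − Pt·Q − F·(d·P − P·d)` with `F`
unit-valued, then `m := (Q − F·d)·F⁻¹` satisfies the Lax equation
`m' = m·Pt − Pt·m`. -/
theorem centrally_extended_factorization_right
    {𝔸 : Type*} [NormedRing 𝔸] [NormedAlgebra ℝ 𝔸]
    (d : 𝔸) (P Pt F Q : ℝ → 𝔸) (F' Q' : ℝ → 𝔸)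
    (hF : ∀ t : ℝ, HasDerivAt F (F' t) t)
    (hQ : ∀ t : ℝ, HasDerivAt Q (Q' t) t)
    (hFu : ∀ t : ℝ, IsUnit (F t))
    (hF' : ∀ t : ℝ, F' t = F t * P t - Pt t * F t)
    (hQ' : ∀ t : ℝ, Q' t = Q t * P t - Pt t * Q t - F t * (d * P t - P t * d)) :
    ∀ t : ℝ, HasDerivAt (fun s : ℝ => (Q s - F s * d) * Ring.inverse (F s))
      (((Q t - F t * d) * Ring.inverse (F t)) * Pt t
        - Pt t * ((Q t - F t * d) * Ring.inverse (F t))) t := by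
  intro t
  set G : 𝔸 := Ring.inverse (F t) with hG
  have hGF : G * F t = 1 := Ring.inverse_mul_cancel _ (hFu t)
  have hFG : F t * G = 1 := Ring.mul_inverse_cancel _ (hFu t)
  have hinv : HasDerivAt (fun s => Ring.inverse (F s)) (-(G * F' t * G)) t :=
    hasDerivAt_ringInverse_comp F (F' t) t (hF t) hFu
  have hm := ((hQ t).sub ((hF t).mul_const d)).mul hinv
  convert hm using 1
  · rfl
  have key1 : Q' t - F' t * d
      = (Q t - F t * d) * P t - Pt t * (Q t - F t * d) := by
    rw [hQ' t, hF' t]; noncomm_ring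
  have key2 : G * F' t * G = P t * G - G * Pt t := by
    have h1 : G * F' t * G = (G * F t) * (P t * G) - (G * Pt t) * (F t * G) := by
      rw [hF' t]; noncomm_ring
    rw [h1, hGF, hFG, one_mul, mul_one]
  rw [key1, key2, ← hG]
  simp only [Pi.sub_apply]
  noncomm_ring
end

section
/- Bäcklund transformation (ce21) preserves the Lax form (the compatibility condition of Section 4 of the paper): Let W be a real Banach space, A : ℝ → L(W,W) a curve of bounded operators, and let f : ℝ → W, f* : ℝ → W* be differentiable with f'(t) = −A(t) f(t) and (f*)'(t) = A(t)* f*(t) for all t. Let l̂ : ℝ → L(W,W) be differentiable with l̂'(t) = l̂(t) ∘ A(t) − A(t) ∘ l̂(t) for all t. Then the transformed curve l(t) := l̂(t) + (w ↦ (f*(t) w) • f(t)) satisfies the same Lax equation l'(t) = l(t) ∘ A(t) − A(t) ∘ l(t) for all t ∈ ℝ. -/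
/-- The Bäcklund transformation (ce21) preserves the Lax form: if
`f' = −A f`, `(f*)' = A* f* = f* ∘ A` and `l̂' = l̂ ∘ A − A ∘ l̂`, then
`l := l̂ + f ⊗ f*` (with `(f ⊗ f*) w = (f* w) • f`) satisfies the same Lax
equation `l' = l ∘ A − A ∘ l`. -/
theorem backlund_preserves_lax
    {W : Type*} [NormedAddCommGroup W] [NormedSpace ℝ W] [CompleteSpace W]
    (A : ℝ → W →L[ℝ] W) (f : ℝ → W) (fstar : ℝ → W →L[ℝ] ℝ)
    (lhat : ℝ → W →L[ℝ] W)
    (hf : ∀ t : ℝ, HasDerivAt f (-(A t (f t))) t)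
    (hfstar : ∀ t : ℝ, HasDerivAt fstar ((fstar t).comp (A t)) t)
    (hlhat : ∀ t : ℝ, HasDerivAt lhat
      ((lhat t).comp (A t) - (A t).comp (lhat t)) t) :
    ∀ t : ℝ, HasDerivAt (fun s : ℝ => lhat s + (fstar s).smulRight (f s))
      ((lhat t + (fstar t).smulRight (f t)).comp (A t)
        - (A t).comp (lhat t + (fstar t).smulRight (f t))) t := by
  intro t
  have hc : HasDerivAt (fun s : ℝ => (ContinuousLinearMap.smulRightL ℝ W W) (fstar s))
      ((ContinuousLinearMap.smulRightL ℝ W W) ((fstar t).comp (A t))) t :=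
    (ContinuousLinearMap.smulRightL ℝ W W).hasFDerivAt.comp_hasDerivAt t (hfstar t)
  have h2 : HasDerivAt (fun s : ℝ => (fstar s).smulRight (f s))
      (((fstar t).comp (A t)).smulRight (f t) + (fstar t).smulRight (-(A t (f t)))) t :=
    hc.clm_apply (hf t)
  have := (hlhat t).add h2
  refine this.congr_deriv ?_
  ext w
  simp [ContinuousLinearMap.smulRight_apply, ContinuousLinearMap.comp_apply]
  abel
end
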